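/- arXiv:2605.11449 — 2 statements merged into one kernel-verified Lean document; each statement's English description precedes it below -/
import Mathlib

section
/- Let (i_1, …, i_t) be any valid firing sequence in the Modified Kostant Game with active set I, and set J = S \ {s_i : i ∈ I}. Then the word s_{i_t} s_{i_{t-1}} ⋯ s_{i_1} is a reduced expression, and the element w = s_{i_t} ⋯ s_{i_1} belongs to W^J. -/
open scoped Classical RealInnerProductSpace

noncomputable section

variable {n d : ℕ}

/-- The pairing `⟨β, γ^∨⟩ = 2(β,γ)/(γ,γ)` of a vector with a coroot. -/
def rsPair (β γ : EuclideanSpace ℝ (Fin d)) : ℝ := 2 * ⟪β, γ⟫ / ⟪γ, γ⟫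

/-- The coroot `γ^∨ = 2γ/(γ,γ)`. -/
def rsCoroot (γ : EuclideanSpace ℝ (Fin d)) : EuclideanSpace ℝ (Fin d) :=
  (2 / ⟪γ, γ⟫) • γ

/-- `⟨·, γ^∨⟩` as a linear functional. -/
def corootForm (γ : EuclideanSpace ℝ (Fin d)) : EuclideanSpace ℝ (Fin d) →ₗ[ℝ] ℝ where
  toFun x := 2 * ⟪x, γ⟫ / ⟪γ, γ⟫
  map_add' x y := by simp only [inner_add_left]; ring
  map_smul' c x := by simp only [real_inner_smul_left, RingHom.id_apply, smul_eq_mul]; ring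

/-- A finite reduced crystallographic root system in the Euclidean space `ℝ^d`, together with a
chosen base of simple roots `α 0, …, α (n-1)`: every root is an integral linear combination of
the simple roots with all coefficients nonnegative or all nonpositive. -/
structure RootSystemBase (n d : ℕ) : Type where
  Φ : Finset (EuclideanSpace ℝ (Fin d))
  α : Fin n → EuclideanSpace ℝ (Fin d)
  α_mem : ∀ i, α i ∈ Φ
  nonzero : ∀ β ∈ Φ, β ≠ 0
  reduced : ∀ β ∈ Φ, ∀ t : ℝ, t • β ∈ Φ → t = 1 ∨ t = -1
  crystallographic : ∀ β ∈ Φ, ∀ γ ∈ Φ, ∃ k : ℤ, rsPair β γ = (k : ℝ)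
  reflClosed : ∀ β ∈ Φ, ∀ γ ∈ Φ, β - rsPair β γ • γ ∈ Φ
  indep : LinearIndependent ℝ α
  base : ∀ β ∈ Φ, ∃ c : Fin n → ℤ,
    β = ∑ i, (c i : ℝ) • α i ∧ ((∀ i, 0 ≤ c i) ∨ (∀ i, c i ≤ 0))

/-- The extended space `E' = E ⊕ ℝ^I`. -/
abbrev ExtSp (n d : ℕ) (I : Finset (Fin n)) : Type :=
  EuclideanSpace ℝ (Fin d) × ({p : Fin n // p ∈ I} → ℝ)

/-- The total source vector `β = ∑_{p ∈ I} β_p` in the extended space. -/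
def betaVec (n d : ℕ) (I : Finset (Fin n)) : ExtSp n d I := (0, fun _ => 1)

namespace RootSystemBase

variable (R : RootSystemBase n d)

lemma alpha_ne_zero (i : Fin n) : R.α i ≠ 0 := R.nonzero _ (R.α_mem i)

lemma inner_alpha_ne_zero (i : Fin n) : ⟪R.α i, R.α i⟫ ≠ 0 := fun h =>
  R.alpha_ne_zero i ((inner_self_eq_zero (𝕜 := ℝ)).mp h)

lemma corootForm_alpha_self (i : Fin n) : corootForm (R.α i) (R.α i) = 2 := by
  have h2 := R.inner_alpha_ne_zero i
  show 2 * ⟪R.α i, R.α i⟫ / ⟪R.α i, R.α i⟫ = 2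
  rw [mul_div_assoc, div_self h2, mul_one]

/-- The simple reflection `s_i : x ↦ x - ⟨x, α_i^∨⟩ α_i` as a linear automorphism of `E`. -/
def sRefl (i : Fin n) :
    EuclideanSpace ℝ (Fin d) ≃ₗ[ℝ] EuclideanSpace ℝ (Fin d) :=
  Module.reflection (R.corootForm_alpha_self i)

/-- The Weyl group `W`, as the subgroup of linear automorphisms of `E` generated by the
simple reflections. -/
def weyl : Subgroup (EuclideanSpace ℝ (Fin d) ≃ₗ[ℝ] EuclideanSpace ℝ (Fin d)) :=
  Subgroup.closure (Set.range R.sRefl)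

/-- `wordProd [i₁, …, i_t] = s_{i₁} ⋯ s_{i_t}`. -/
def wordProd (l : List (Fin n)) :
    EuclideanSpace ℝ (Fin d) ≃ₗ[ℝ] EuclideanSpace ℝ (Fin d) :=
  (l.map R.sRefl).prod

/-- The Weyl group element `s_{i_t} ⋯ s_{i_1}` associated to the firing sequence
`(i_1, …, i_t)`. -/
def seqProd (l : List (Fin n)) :
    EuclideanSpace ℝ (Fin d) ≃ₗ[ℝ] EuclideanSpace ℝ (Fin d) :=
  (l.reverse.map R.sRefl).prod

/-- The length function `ℓ` of the Coxeter system `(W, S)`: the minimal number of simple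
reflections needed to express `w`. -/
def len (w : EuclideanSpace ℝ (Fin d) ≃ₗ[ℝ] EuclideanSpace ℝ (Fin d)) : ℕ :=
  sInf {t | ∃ l : List (Fin n), l.length = t ∧ R.wordProd l = w}

/-- The set `W^J` of minimal length representatives of `W/W_J`, for `J = S \ {s_i : i ∈ I}`:
those `w ∈ W` with `ℓ(w s_j) > ℓ(w)` for all `j ∉ I`. -/
def minReps (I : Finset (Fin n)) :
    Set (EuclideanSpace ℝ (Fin d) ≃ₗ[ℝ] EuclideanSpace ℝ (Fin d)) :=
  {w | w ∈ R.weyl ∧ ∀ j, j ∉ I → R.len w < R.len (w * R.sRefl j)}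

/-- The Cartan matrix `a_{uv} = ⟨α_u, α_v^∨⟩` (an integer by crystallinity). -/
def cartan (u v : Fin n) : ℤ := ⌊rsPair (R.α u) (R.α v)⌋

/-- The set `Φ⁺` of positive roots. -/
def posRoots : Finset (EuclideanSpace ℝ (Fin d)) :=
  R.Φ.filter fun β => ∃ c : Fin n → ℤ, β = ∑ i, (c i : ℝ) • R.α i ∧ ∀ i, 0 ≤ c i

/-- The set `Φ_P⁺` of positive roots lying in the span of the simple roots `α_j`, `j ∈ P`. -/
def parPos (P : Finset (Fin n)) : Finset (EuclideanSpace ℝ (Fin d)) :=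
  R.posRoots.filter fun β => β ∈ Submodule.span ℝ (R.α '' (P : Set (Fin n)))

/-- `∑_{u ≠ v} (−a_{uv}) c_u + [v ∈ I]`. -/
def chipBound (I : Finset (Fin n)) (c : Fin n → ℤ) (v : Fin n) : ℤ :=
  (∑ u ∈ Finset.univ.erase v, -(R.cartan u v) * c u) + (if v ∈ I then 1 else 0)

/-- Vertex `v` is sad in the configuration `c` (Modified Kostant Game with active set `I`). -/
def Sad (I : Finset (Fin n)) (c : Fin n → ℤ) (v : Fin n) : Prop :=
  2 * c v < R.chipBound I c v

/-- Firing vertex `v`. -/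
def fire (I : Finset (Fin n)) (c : Fin n → ℤ) (v : Fin n) : Fin n → ℤ :=
  Function.update c v (R.chipBound I c v - c v)

end RootSystemBase

/-- `ValidFrom R I c l`: starting from the configuration `c`, the sequence `l` fires a sad
vertex at each step. -/
def RootSystemBase.ValidFrom (R : RootSystemBase n d) (I : Finset (Fin n)) :
    (Fin n → ℤ) → List (Fin n) → Prop
  | _, [] => True
  | c, v :: l => R.Sad I c v ∧ RootSystemBase.ValidFrom R I (R.fire I c v) l

namespace RootSystemBase

variable (R : RootSystemBase n d)

/-- A valid firing sequence: starts at the zero configuration and fires a sad vertex at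
each step. -/
def Valid (I : Finset (Fin n)) (l : List (Fin n)) : Prop := R.ValidFrom I 0 l

/-- The configuration reached after playing the sequence `l` from the zero configuration. -/
def play (I : Finset (Fin n)) (l : List (Fin n)) : Fin n → ℤ :=
  l.foldl (R.fire I) 0

/-- A maximal valid firing sequence: no vertex is sad in the final configuration. -/
def MaximalSeq (I : Finset (Fin n)) (l : List (Fin n)) : Prop :=
  R.Valid I l ∧ ∀ v, ¬ R.Sad I (R.play I l) v

/-- The (integer) coefficients of a vector in the basis of simple coroots, when they exist. -/
def corootCoeffs (x : EuclideanSpace ℝ (Fin d)) : Fin n → ℤ :=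
  if h : ∃ k : Fin n → ℤ, x = ∑ j, (k j : ℝ) • rsCoroot (R.α j) then h.choose else 0

/-- The `I`-height of a (co)vector: the sum over `j ∈ I` of its coefficients in the basis
of simple coroots. -/
def htI (I : Finset (Fin n)) (x : EuclideanSpace ℝ (Fin d)) : ℤ :=
  ∑ j ∈ I, R.corootCoeffs x j

end RootSystemBase

/-- The extended pairing `⟨·, α_i^∨⟩` on `E' = E ⊕ ℝ^I`, determined by
`⟨β_p, α_i^∨⟩ = −δ_{pi}`, as a linear functional. -/
def extForm (R : RootSystemBase n d) (I : Finset (Fin n)) (i : Fin n) :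
    ExtSp n d I →ₗ[ℝ] ℝ :=
  (corootForm (R.α i)).comp (LinearMap.fst ℝ _ _) -
    (if h : i ∈ I then
      (LinearMap.proj (R := ℝ) (φ := fun _ : {p : Fin n // p ∈ I} => ℝ) ⟨i, h⟩).comp
        (LinearMap.snd ℝ _ _)
    else 0)

namespace RootSystemBase

variable (R : RootSystemBase n d)

lemma extForm_apply (I : Finset (Fin n)) (i : Fin n) (x : ExtSp n d I) :
    extForm R I i x = corootForm (R.α i) x.1 - (if h : i ∈ I then x.2 ⟨i, h⟩ else 0) := by
  by_cases h : i ∈ I <;> simp [extForm, h]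

lemma extForm_alpha (I : Finset (Fin n)) (i : Fin n) :
    extForm R I i ((R.α i, 0) : ExtSp n d I) = 2 := by
  rw [R.extForm_apply]
  simp [R.corootForm_alpha_self i]

/-- The simple reflection `s_i : x ↦ x − ⟨x, α_i^∨⟩ α_i` on the extended space `E'`. -/
def extRefl (I : Finset (Fin n)) (i : Fin n) : ExtSp n d I ≃ₗ[ℝ] ExtSp n d I :=
  Module.reflection (R.extForm_alpha I i)

/-- The extended pairing `⟨x, α_i^∨⟩` for `x ∈ E'`. -/
def extPair (I : Finset (Fin n)) (x : ExtSp n d I) (i : Fin n) : ℝ := extForm R I i x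

/-- The action of `s_{i_t} ⋯ s_{i_1}` on the extended space `E'`. -/
def extSeqProd (I : Finset (Fin n)) (l : List (Fin n)) : ExtSp n d I ≃ₗ[ℝ] ExtSp n d I :=
  (l.reverse.map (R.extRefl I)).prod

end RootSystemBase

namespace RootSystemBase

variable (R : RootSystemBase n d)

lemma inner_alpha_pos (i : Fin n) : 0 < ⟪R.α i, R.α i⟫ :=
  lt_of_le_of_ne real_inner_self_nonneg (Ne.symm ((inner_self_ne_zero (𝕜 := ℝ)).2 (R.alpha_ne_zero i)))

lemma cartan_real (u v : Fin n) : ((R.cartan u v : ℤ) : ℝ) = rsPair (R.α u) (R.α v) := by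
  obtain ⟨k, hk⟩ := R.crystallographic _ (R.α_mem u) _ (R.α_mem v)
  rw [cartan, hk]; norm_num

lemma corootForm_apply (γ x : EuclideanSpace ℝ (Fin d)) :
    corootForm γ x = rsPair x γ := rfl

lemma sRefl_apply (i : Fin n) (x : EuclideanSpace ℝ (Fin d)) :
    R.sRefl i x = x - rsPair x (R.α i) • R.α i := by
  rw [sRefl, Module.reflection_apply]; rfl

lemma sRefl_root {β : EuclideanSpace ℝ (Fin d)} (hβ : β ∈ R.Φ) (i : Fin n) :
    R.sRefl i β ∈ R.Φ := by
  rw [R.sRefl_apply]; exact R.reflClosed _ hβ _ (R.α_mem i)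

lemma sRefl_sRefl (i : Fin n) (x : EuclideanSpace ℝ (Fin d)) :
    R.sRefl i (R.sRefl i x) = x :=
  Module.involutive_reflection (R.corootForm_alpha_self i) x

lemma rsPair_self {β : EuclideanSpace ℝ (Fin d)} (hβ : β ≠ 0) : rsPair β β = 2 := by
  have : ⟪β, β⟫ ≠ 0 := fun h => hβ ((inner_self_eq_zero (𝕜 := ℝ)).mp h)
  rw [rsPair, mul_div_assoc, div_self this, mul_one]

lemma sRefl_alpha (i : Fin n) : R.sRefl i (R.α i) = -(R.α i) := by
  rw [R.sRefl_apply, rsPair_self (R.alpha_ne_zero i), two_smul]; abel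

lemma neg_root {β : EuclideanSpace ℝ (Fin d)} (hβ : β ∈ R.Φ) : -β ∈ R.Φ := by
  have := R.reflClosed β hβ β hβ
  rwa [rsPair_self (R.nonzero _ hβ), two_smul, sub_add_eq_sub_sub, sub_sub_cancel_left] at this

lemma coeff_unique {c e : Fin n → ℝ} (h : ∑ u, c u • R.α u = ∑ u, e u • R.α u) : c = e := by
  have h2 : ∑ u, (c u - e u) • R.α u = 0 := by
    simp [sub_smul, Finset.sum_sub_distrib, h]
  have := Fintype.linearIndependent_iff.1 R.indep _ h2
  funext u; have := this u; linarith

end RootSystemBase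
namespace RootSystemBase

variable (R : RootSystemBase n d)

lemma mem_posRoots {β : EuclideanSpace ℝ (Fin d)} :
    β ∈ R.posRoots ↔ β ∈ R.Φ ∧ ∃ c : Fin n → ℤ, β = ∑ i, (c i : ℝ) • R.α i ∧ ∀ i, 0 ≤ c i :=
  Finset.mem_filter

lemma posRoot_mem {β : EuclideanSpace ℝ (Fin d)} (h : β ∈ R.posRoots) : β ∈ R.Φ :=
  (R.mem_posRoots.1 h).1

lemma alpha_posRoot (i : Fin n) : R.α i ∈ R.posRoots := by
  refine R.mem_posRoots.2 ⟨R.α_mem i, fun u => if u = i then 1 else 0, ?_, fun u => by positivity⟩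
  rw [Finset.sum_eq_single i] <;> simp (config := { contextual := true })

lemma pos_or_neg {β : EuclideanSpace ℝ (Fin d)} (hβ : β ∈ R.Φ) :
    β ∈ R.posRoots ∨ -β ∈ R.posRoots := by
  obtain ⟨c, hsum, hsign⟩ := R.base β hβ
  rcases hsign with h | h
  · exact Or.inl (R.mem_posRoots.2 ⟨hβ, c, hsum, h⟩)
  · refine Or.inr (R.mem_posRoots.2 ⟨R.neg_root hβ, fun u => -(c u), ?_, fun u => neg_nonneg.2 (h u)⟩)
    rw [hsum, ← Finset.sum_neg_distrib]
    exact Finset.sum_congr rfl fun u _ => by push_cast; rw [neg_smul]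

lemma not_pos_neg {β : EuclideanSpace ℝ (Fin d)} (h : β ∈ R.posRoots) : -β ∉ R.posRoots := by
  intro h'
  obtain ⟨hβΦ, c, hsum, hc⟩ := R.mem_posRoots.1 h
  obtain ⟨hβΦ', e, hesum, he⟩ := R.mem_posRoots.1 h'
  have heq : (fun u => (c u : ℝ)) = fun u => (-(e u) : ℝ) := by
    apply R.coeff_unique
    rw [← hsum]
    have : β = -∑ i, ((e i : ℝ)) • R.α i := by rw [← hesum]; abel
    rw [this, ← Finset.sum_neg_distrib]
    exact Finset.sum_congr rfl fun u _ => by push_cast; rw [neg_smul]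
  have hc0 : ∀ u, (c u : ℝ) = 0 := by
    intro u
    have h1 := congrFun heq u
    have h2 := hc u; have h3 := he u
    have h2' : (0:ℝ) ≤ (c u : ℝ) := by exact_mod_cast h2
    have h3' : (0:ℝ) ≤ (e u : ℝ) := by exact_mod_cast h3
    push_cast at h1; linarith
  apply R.nonzero β hβΦ
  rw [hsum]
  exact Finset.sum_eq_zero fun u _ => by rw [hc0 u, zero_smul]

lemma sRefl_posRoot {β : EuclideanSpace ℝ (Fin d)} (h : β ∈ R.posRoots) (v : Fin n)
    (hne : β ≠ R.α v) : R.sRefl v β ∈ R.posRoots := by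
  obtain ⟨hβΦ, c, hsum, hc⟩ := R.mem_posRoots.1 h
  have hu : ∃ u, u ≠ v ∧ c u ≠ 0 := by
    by_contra hcon
    push_neg at hcon
    have hβv : β = (c v : ℝ) • R.α v := by
      rw [hsum, Finset.sum_eq_single v]
      · intro u _ huv; rw [hcon u huv]; simp
      · simp
    have hred := R.reduced (R.α v) (R.α_mem v) ((c v : ℝ)) (by rw [← hβv]; exact hβΦ)
    rcases hred with h1 | h1
    · exact hne (by rw [hβv, h1, one_smul])
    · have := hc v
      have : (0:ℝ) ≤ (c v : ℝ) := by exact_mod_cast this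
      rw [h1] at this; linarith
  obtain ⟨k, hk⟩ := R.crystallographic β hβΦ (R.α v) (R.α_mem v)
  set c' : Fin n → ℤ := Function.update c v (c v - k) with hc'
  have hs' : R.sRefl v β = ∑ u, (c' u : ℝ) • R.α u := by
    have hpt : ∀ u : Fin n, ((c' u : ℝ)) • R.α u
        = (c u : ℝ) • R.α u - (if u = v then (k : ℝ) • R.α v else 0) := by
      intro u
      by_cases h : u = v
      · subst h; rw [hc', Function.update_self]; push_cast; rw [sub_smul]; simp
      · rw [hc', Function.update_of_ne h]; simp [h]
    rw [R.sRefl_apply, hk, hsum, Finset.sum_congr rfl (fun u _ => hpt u),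
      Finset.sum_sub_distrib, Finset.sum_ite_eq' Finset.univ v]
    simp
  have hΦ' := R.sRefl_root hβΦ v
  obtain ⟨e, hesum, hsign⟩ := R.base _ hΦ'
  have hce : (fun u => (c' u : ℝ)) = fun u => (e u : ℝ) :=
    R.coeff_unique (by rw [← hs', ← hesum])
  rcases hsign with hp | hn
  · exact R.mem_posRoots.2 ⟨hΦ', e, hesum, hp⟩
  · exfalso
    obtain ⟨u, huv, hcu⟩ := hu
    have h1 : (c' u : ℝ) = (e u : ℝ) := congrFun hce u
    have h2 : c' u = e u := by exact_mod_cast h1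
    have h3 : c' u = c u := by rw [hc']; exact Function.update_of_ne huv _ _
    have := hc u; have := hn u; omega

end RootSystemBase
namespace RootSystemBase

variable (R : RootSystemBase n d)

/-- The inversion set of `w`. -/
def InvSet (w : EuclideanSpace ℝ (Fin d) ≃ₗ[ℝ] EuclideanSpace ℝ (Fin d)) :
    Finset (EuclideanSpace ℝ (Fin d)) :=
  R.posRoots.filter fun β => w β ∉ R.posRoots

/-- The number of inversions of `w`. -/
def inv' (w : EuclideanSpace ℝ (Fin d) ≃ₗ[ℝ] EuclideanSpace ℝ (Fin d)) : ℕ :=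
  (R.InvSet w).card

lemma mem_InvSet {w} {β : EuclideanSpace ℝ (Fin d)} :
    β ∈ R.InvSet w ↔ β ∈ R.posRoots ∧ w β ∉ R.posRoots := Finset.mem_filter

lemma mulApply (w w' : EuclideanSpace ℝ (Fin d) ≃ₗ[ℝ] EuclideanSpace ℝ (Fin d)) (x) :
    (w * w') x = w (w' x) := rfl

lemma inv_one : R.inv' 1 = 0 := by
  rw [inv', Finset.card_eq_zero, InvSet, Finset.filter_eq_empty_iff]
  intro β hβ h
  exact h hβ

lemma inv_mul_sRefl {w} (v : Fin n) (hv : w (R.α v) ∈ R.posRoots) :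
    R.inv' (w * R.sRefl v) = R.inv' w + 1 := by
  have hαv : R.α v ∉ R.InvSet w := fun hmem => (R.mem_InvSet.1 hmem).2 hv
  have key : (R.InvSet (w * R.sRefl v)).card = (insert (R.α v) (R.InvSet w)).card := by
    apply Finset.card_bij (fun β _ => if β = R.α v then R.α v else R.sRefl v β)
    · intro β hβ
      obtain ⟨hβp, hβn⟩ := R.mem_InvSet.1 hβ
      by_cases h : β = R.α v
      · simp [h]
      · rw [if_neg h]
        refine Finset.mem_insert_of_mem (R.mem_InvSet.2 ⟨R.sRefl_posRoot hβp v h, ?_⟩)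
        rwa [← mulApply w (R.sRefl v)]
    · intro a ha b hb hab
      obtain ⟨hap, _⟩ := R.mem_InvSet.1 ha
      obtain ⟨hbp, _⟩ := R.mem_InvSet.1 hb
      by_cases h1 : a = R.α v <;> by_cases h2 : b = R.α v
      · rw [h1, h2]
      · rw [if_pos h1, if_neg h2] at hab
        exfalso
        have : b = R.sRefl v (R.α v) := by rw [hab, R.sRefl_sRefl]
        rw [R.sRefl_alpha] at this
        exact R.not_pos_neg (R.alpha_posRoot v) (this ▸ hbp)
      · rw [if_neg h1, if_pos h2] at hab
        exfalso
        have : a = R.sRefl v (R.α v) := by rw [← hab, R.sRefl_sRefl]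
        rw [R.sRefl_alpha] at this
        exact R.not_pos_neg (R.alpha_posRoot v) (this ▸ hap)
      · rw [if_neg h1, if_neg h2] at hab
        exact (R.sRefl v).injective hab
    · intro γ hγ
      rcases Finset.mem_insert.1 hγ with h | h
      · refine ⟨R.α v, ?_, by rw [if_pos rfl, h]⟩
        refine R.mem_InvSet.2 ⟨R.alpha_posRoot v, ?_⟩
        rw [mulApply, R.sRefl_alpha, map_neg]
        exact R.not_pos_neg hv
      · obtain ⟨hγp, hγn⟩ := R.mem_InvSet.1 h
        have hγv : γ ≠ R.α v := fun he => hγn (he ▸ hv)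
        have hβp : R.sRefl v γ ∈ R.posRoots := R.sRefl_posRoot hγp v hγv
        have hβv : R.sRefl v γ ≠ R.α v := by
          intro he
          have : γ = R.sRefl v (R.α v) := by rw [← he, R.sRefl_sRefl]
          rw [R.sRefl_alpha] at this
          exact R.not_pos_neg (R.alpha_posRoot v) (this ▸ hγp)
        refine ⟨R.sRefl v γ, R.mem_InvSet.2 ⟨hβp, ?_⟩, by rw [if_neg hβv, R.sRefl_sRefl]⟩
        rwa [mulApply, R.sRefl_sRefl]
  rw [inv', key, Finset.card_insert_of_notMem hαv, inv', add_comm]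

lemma inv_sRefl_mul_le (v : Fin n) (u : EuclideanSpace ℝ (Fin d) ≃ₗ[ℝ] EuclideanSpace ℝ (Fin d)) :
    R.inv' (R.sRefl v * u) ≤ R.inv' u + 1 := by
  have hsub : R.InvSet (R.sRefl v * u) ⊆
      R.InvSet u ∪ R.posRoots.filter (fun β => u β = R.α v) := by
    intro β hβ
    obtain ⟨hβp, hβn⟩ := R.mem_InvSet.1 hβ
    by_cases h1 : u β ∈ R.posRoots
    · by_cases h2 : u β = R.α v
      · exact Finset.mem_union_right _ (Finset.mem_filter.2 ⟨hβp, h2⟩)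
      · exact absurd (R.sRefl_posRoot h1 v h2) (by rwa [mulApply] at hβn)
    · exact Finset.mem_union_left _ (R.mem_InvSet.2 ⟨hβp, h1⟩)
  have hcard1 : (R.posRoots.filter (fun β => u β = R.α v)).card ≤ 1 := by
    apply Finset.card_le_one.2
    intro a ha b hb
    have h1 := (Finset.mem_filter.1 ha).2
    have h2 := (Finset.mem_filter.1 hb).2
    exact u.injective (h1.trans h2.symm)
  calc R.inv' (R.sRefl v * u) ≤ (R.InvSet u ∪ _).card := Finset.card_le_card hsub
    _ ≤ (R.InvSet u).card + _ := Finset.card_union_le _ _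
    _ ≤ R.inv' u + 1 := by exact Nat.add_le_add le_rfl hcard1

lemma wordProd_nil : R.wordProd [] = 1 := rfl

lemma wordProd_cons (v : Fin n) (l : List (Fin n)) :
    R.wordProd (v :: l) = R.sRefl v * R.wordProd l := by
  rw [wordProd, List.map_cons, List.prod_cons]; rfl

lemma inv_wordProd_le (l : List (Fin n)) : R.inv' (R.wordProd l) ≤ l.length := by
  induction l with
  | nil => rw [wordProd_nil, R.inv_one]; exact le_rfl
  | cons v l ih =>
    rw [wordProd_cons]
    calc R.inv' (R.sRefl v * R.wordProd l) ≤ R.inv' (R.wordProd l) + 1 := R.inv_sRefl_mul_le v _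
      _ ≤ l.length + 1 := Nat.add_le_add ih le_rfl

lemma seqProd_nil : R.seqProd [] = 1 := rfl

lemma seqProd_eq_wordProd (l : List (Fin n)) : R.seqProd l = R.wordProd l.reverse := rfl

lemma seqProd_cons (v : Fin n) (l : List (Fin n)) :
    R.seqProd (v :: l) = R.seqProd l * R.sRefl v := by
  rw [seqProd, seqProd, List.reverse_cons, List.map_append, List.prod_append]
  simp

lemma seqProd_root (l : List (Fin n)) {β : EuclideanSpace ℝ (Fin d)} (hβ : β ∈ R.Φ) :
    R.seqProd l β ∈ R.Φ := by
  induction l generalizing β with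
  | nil => exact hβ
  | cons v l ih =>
    rw [seqProd_cons, mulApply]
    exact ih (R.sRefl_root hβ v)

end RootSystemBase
namespace RootSystemBase

variable (R : RootSystemBase n d)

/-- A basis of the ambient space extending the simple roots. -/
def extBasis : Module.Basis ((((linearIndepOn_id_range_iff R.indep.injective).mpr R.indep)).extend (Set.subset_univ _)) ℝ
    (EuclideanSpace ℝ (Fin d)) :=
  Module.Basis.extend ((linearIndepOn_id_range_iff R.indep.injective).mpr R.indep)

lemma alpha_mem_extend (j : Fin n) :
    R.α j ∈ (((linearIndepOn_id_range_iff R.indep.injective).mpr R.indep)).extend (Set.subset_univ _) :=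
  (((linearIndepOn_id_range_iff R.indep.injective).mpr R.indep)).subset_extend _ (Set.mem_range_self j)

/-- The coordinate functional dual to `α j` (relative to the extended basis). -/
def coordFn (j : Fin n) : EuclideanSpace ℝ (Fin d) →ₗ[ℝ] ℝ :=
  R.extBasis.coord ⟨R.α j, R.alpha_mem_extend j⟩

lemma coordFn_alpha (j u : Fin n) : R.coordFn j (R.α u) = if u = j then 1 else 0 := by
  have h : R.extBasis ⟨R.α u, R.alpha_mem_extend u⟩ = R.α u := Module.Basis.extend_apply_self _ _
  rw [coordFn, Module.Basis.coord_apply, ← h, Module.Basis.repr_self, Finsupp.single_apply]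
  by_cases h2 : u = j
  · subst h2; rw [if_pos rfl, if_pos rfl]
  · rw [if_neg, if_neg h2]
    intro he
    exact h2 (R.indep.injective (Subtype.ext_iff.1 he))

/-- The correction functional `L` with `L(α_u) = -[u ∈ I] (α_u, α_u)/2`. -/
def lform (I : Finset (Fin n)) : EuclideanSpace ℝ (Fin d) →ₗ[ℝ] ℝ :=
  ∑ p ∈ I, (-(⟪R.α p, R.α p⟫ / 2)) • R.coordFn p

lemma lform_alpha (I : Finset (Fin n)) (u : Fin n) :
    R.lform I (R.α u) = if u ∈ I then -(⟪R.α u, R.α u⟫ / 2) else 0 := by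
  rw [lform, LinearMap.sum_apply]
  have : ∀ p ∈ I, ((-(⟪R.α p, R.α p⟫ / 2)) • R.coordFn p) (R.α u)
      = if p = u then -(⟪R.α u, R.α u⟫ / 2) else 0 := by
    intro p _
    rw [LinearMap.smul_apply, R.coordFn_alpha p u, smul_eq_mul]
    by_cases h : p = u
    · subst h; rw [if_pos rfl, if_pos rfl, mul_one]
    · rw [if_neg h, if_neg (fun he => h he.symm), mul_zero]
  rw [Finset.sum_congr rfl this, Finset.sum_ite_eq' I u (fun _ => -(⟪R.α u, R.α u⟫ / 2))]

/-- `γ_c = ∑ c_u α_u`. -/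
def gamma (c : Fin n → ℤ) : EuclideanSpace ℝ (Fin d) := ∑ u, (c u : ℝ) • R.α u

/-- The pairing `q(c, z) = (γ_c, z) + L(z)` encoding the game. -/
def qv (I : Finset (Fin n)) (c : Fin n → ℤ) (z : EuclideanSpace ℝ (Fin d)) : ℝ :=
  ⟪R.gamma c, z⟫ + R.lform I z

lemma qv_neg (I : Finset (Fin n)) (c : Fin n → ℤ) (z : EuclideanSpace ℝ (Fin d)) :
    R.qv I c (-z) = -R.qv I c z := by
  rw [qv, qv, inner_neg_right, map_neg]; ring

lemma inner_alpha_cartan (u v : Fin n) :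
    ⟪R.α u, R.α v⟫ = ((R.cartan u v : ℤ) : ℝ) * ⟪R.α v, R.α v⟫ / 2 := by
  have hv := (R.inner_alpha_pos v).ne'
  rw [R.cartan_real, rsPair, div_mul_cancel₀ _ hv]
  ring

lemma cartan_self (v : Fin n) : R.cartan v v = 2 := by
  rw [cartan, rsPair_self (R.alpha_ne_zero v)]
  norm_num

lemma chipBound_eq (I : Finset (Fin n)) (c : Fin n → ℤ) (v : Fin n) :
    2 * c v - R.chipBound I c v = (∑ u, R.cartan u v * c u) - (if v ∈ I then 1 else 0) := by
  have h3 : ∑ u, R.cartan u v * c u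
      = R.cartan v v * c v + ∑ u ∈ Finset.univ.erase v, R.cartan u v * c u :=
    (Finset.add_sum_erase _ _ (Finset.mem_univ v)).symm
  have h2 : ∑ u ∈ Finset.univ.erase v, -R.cartan u v * c u
      = -∑ u ∈ Finset.univ.erase v, R.cartan u v * c u := by
    rw [← Finset.sum_neg_distrib]
    exact Finset.sum_congr rfl fun u _ => by ring
  rw [chipBound, h3, R.cartan_self, h2]; ring

lemma qv_alpha (I : Finset (Fin n)) (c : Fin n → ℤ) (v : Fin n) :
    R.qv I c (R.α v) = (⟪R.α v, R.α v⟫ / 2) * ((2 * c v - R.chipBound I c v : ℤ) : ℝ) := by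
  rw [qv, R.lform_alpha I v, R.chipBound_eq I c v]
  rw [gamma, sum_inner]
  have h1 : ∀ u ∈ Finset.univ, ⟪(c u : ℝ) • R.α u, R.α v⟫
      = (⟪R.α v, R.α v⟫ / 2) * (((R.cartan u v : ℤ) : ℝ) * (c u : ℝ)) := by
    intro u _
    rw [real_inner_smul_left, R.inner_alpha_cartan u v]; ring
  rw [Finset.sum_congr rfl h1, ← Finset.mul_sum]
  push_cast
  rcases Classical.em (v ∈ I) with h | h <;> simp only [h, if_true, if_false] <;> ring

end RootSystemBase
namespace RootSystemBase

variable (R : RootSystemBase n d)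

lemma sad_iff (I : Finset (Fin n)) (c : Fin n → ℤ) (v : Fin n) :
    R.Sad I c v ↔ R.qv I c (R.α v) < 0 := by
  rw [R.qv_alpha]
  have hA : 0 < ⟪R.α v, R.α v⟫ / 2 := by linarith [R.inner_alpha_pos v]
  constructor
  · intro h
    have h' : (2 * c v - R.chipBound I c v : ℤ) < 0 := by rw [Sad] at h; omega
    have : ((2 * c v - R.chipBound I c v : ℤ) : ℝ) < 0 := by exact_mod_cast h'
    exact mul_neg_of_pos_of_neg hA this
  · intro h
    rw [Sad]
    by_contra hc
    push_neg at hc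
    have h' : (0 : ℤ) ≤ 2 * c v - R.chipBound I c v := by omega
    have : (0:ℝ) ≤ ((2 * c v - R.chipBound I c v : ℤ) : ℝ) := by exact_mod_cast h'
    nlinarith

lemma gamma_fire (I : Finset (Fin n)) (c : Fin n → ℤ) (v : Fin n) :
    R.gamma (R.fire I c v)
      = R.gamma c - ((2 * c v - R.chipBound I c v : ℤ) : ℝ) • R.α v := by
  rw [fire, gamma, gamma]
  have hpt : ∀ u : Fin n, ((Function.update c v (R.chipBound I c v - c v) u : ℤ) : ℝ) • R.α u
      = (c u : ℝ) • R.α u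
        - (if u = v then ((2 * c v - R.chipBound I c v : ℤ) : ℝ) • R.α v else 0) := by
    intro u
    by_cases h : u = v
    · subst h
      rw [Function.update_self, if_pos rfl, ← sub_smul]
      congr 1
      push_cast
      ring
    · rw [Function.update_of_ne h, if_neg h, sub_zero]
  rw [Finset.sum_congr rfl (fun u _ => hpt u), Finset.sum_sub_distrib,
    Finset.sum_ite_eq' Finset.univ v]
  simp

lemma qv_fire (I : Finset (Fin n)) (c : Fin n → ℤ) (v : Fin n) (z : EuclideanSpace ℝ (Fin d)) :
    R.qv I (R.fire I c v) z = R.qv I c (R.sRefl v z) := by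
  have hA0 := R.inner_alpha_pos v
  have hq := R.qv_alpha I c v
  rw [qv] at hq
  rw [qv, qv, R.gamma_fire, R.sRefl_apply, rsPair, inner_sub_left, real_inner_smul_left,
    map_sub, map_smul, inner_sub_right, real_inner_smul_right, smul_eq_mul]
  have hz : ⟪R.α v, z⟫ = ⟪z, R.α v⟫ := real_inner_comm _ _
  rw [hz]
  have key : 2 * ⟪z, R.α v⟫ / ⟪R.α v, R.α v⟫ * ⟪R.gamma c, R.α v⟫
        + 2 * ⟪z, R.α v⟫ / ⟪R.α v, R.α v⟫ * R.lform I (R.α v)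
      = ⟪z, R.α v⟫ * ((2 * c v - R.chipBound I c v : ℤ) : ℝ) := by
    rw [← mul_add, hq]
    have hA' : ⟪R.α v, R.α v⟫ ≠ 0 := hA0.ne'
    generalize ⟪z, R.α v⟫ = z1
    generalize ((2 * c v - R.chipBound I c v : ℤ) : ℝ) = m
    generalize hA : ⟪R.α v, R.α v⟫ = A at hA' ⊢
    field_simp
  linear_combination key

lemma validFrom_cons (I : Finset (Fin n)) (c : Fin n → ℤ) (v : Fin n) (l : List (Fin n)) :
    R.ValidFrom I c (v :: l) ↔ R.Sad I c v ∧ R.ValidFrom I (R.fire I c v) l := Iff.rfl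

lemma inv_invariant (I : Finset (Fin n)) (l : List (Fin n)) :
    ∀ c : Fin n → ℤ, R.ValidFrom I c l → ∀ β ∈ R.posRoots, R.seqProd l β ∉ R.posRoots →
      R.qv I c β < 0 := by
  induction l with
  | nil => intro c _ β hβ hn; exact absurd hβ hn
  | cons v l ih =>
    intro c hval β hβ hn
    obtain ⟨hsad, hval'⟩ := (R.validFrom_cons I c v l).1 hval
    rw [R.seqProd_cons, mulApply] at hn
    by_cases hbv : β = R.α v
    · subst hbv
      exact (R.sad_iff I c v).1 hsad
    · have hγ := R.sRefl_posRoot hβ v hbv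
      have hlt := ih (R.fire I c v) hval' _ hγ hn
      rwa [R.qv_fire, R.sRefl_sRefl] at hlt

lemma inv_valid (I : Finset (Fin n)) (l : List (Fin n)) :
    ∀ c : Fin n → ℤ, R.ValidFrom I c l → R.inv' (R.seqProd l) = l.length := by
  induction l with
  | nil => intro c _; rw [R.seqProd_nil, R.inv_one]; rfl
  | cons v l ih =>
    intro c hval
    obtain ⟨hsad, hval'⟩ := (R.validFrom_cons I c v l).1 hval
    rw [R.seqProd_cons]
    have hpos : (R.seqProd l) (R.α v) ∈ R.posRoots := by
      by_contra hneg
      have hlt := R.inv_invariant I l (R.fire I c v) hval' (R.α v) (R.alpha_posRoot v) hneg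
      rw [R.qv_fire, R.sRefl_alpha, R.qv_neg] at hlt
      have hlt2 := (R.sad_iff I c v).1 hsad
      linarith
    rw [R.inv_mul_sRefl v hpos, ih _ hval']
    rfl

end RootSystemBase
namespace RootSystemBase

variable (R : RootSystemBase n d)

lemma wordProd_append (a b : List (Fin n)) :
    R.wordProd (a ++ b) = R.wordProd a * R.wordProd b := by
  rw [wordProd, wordProd, wordProd, List.map_append, List.prod_append]

lemma wordProd_singleton (j : Fin n) : R.wordProd [j] = R.sRefl j := by
  rw [wordProd, List.map_singleton, List.prod_singleton]

lemma len_le {w} (l : List (Fin n)) (h : R.wordProd l = w) : R.len w ≤ l.length :=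
  Nat.sInf_le ⟨l, rfl, h⟩

lemma inv_le_len {w} (l : List (Fin n)) (h : R.wordProd l = w) : R.inv' w ≤ R.len w := by
  have hne : {t | ∃ l' : List (Fin n), l'.length = t ∧ R.wordProd l' = w}.Nonempty :=
    ⟨l.length, l, rfl, h⟩
  obtain ⟨l₀, hlen, hw⟩ := Nat.sInf_mem hne
  calc R.inv' w = R.inv' (R.wordProd l₀) := by rw [hw]
    _ ≤ l₀.length := R.inv_wordProd_le l₀
    _ = R.len w := hlen

lemma qv_zero_alpha (I : Finset (Fin n)) (j : Fin n) (hj : j ∉ I) :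
    R.qv I 0 (R.α j) = 0 := by
  rw [qv, R.lform_alpha, if_neg hj]
  have hg : R.gamma 0 = 0 := by rw [gamma]; simp
  rw [hg, inner_zero_left, add_zero]

end RootSystemBase

theorem statement0' {n d : ℕ} (R : RootSystemBase n d) (I : Finset (Fin n))
    (l : List (Fin n)) (hl : R.Valid I l) :
    R.len (R.seqProd l) = l.length ∧ R.seqProd l ∈ R.minReps I := by
  have hrefl : R.wordProd l.reverse = R.seqProd l := rfl
  have hvf : R.ValidFrom I 0 l := hl
  have hlen1 : R.len (R.seqProd l) ≤ l.length := by
    have h := R.len_le l.reverse hrefl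
    rwa [List.length_reverse] at h
  have hinv : R.inv' (R.seqProd l) = l.length := R.inv_valid I l 0 hvf
  have hge : R.inv' (R.seqProd l) ≤ R.len (R.seqProd l) := R.inv_le_len l.reverse hrefl
  have hlen : R.len (R.seqProd l) = l.length := le_antisymm hlen1 (by omega)
  refine ⟨hlen, ?_, ?_⟩
  · apply Subgroup.list_prod_mem
    intro x hx
    obtain ⟨i, _, hi⟩ := List.mem_map.1 hx
    exact Subgroup.subset_closure ⟨i, hi⟩
  · intro j hj
    have hpos : (R.seqProd l) (R.α j) ∈ R.posRoots := by
      by_contra hneg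
      have h0 := R.inv_invariant I l 0 hvf (R.α j) (R.alpha_posRoot j) hneg
      rw [R.qv_zero_alpha I j hj] at h0
      exact lt_irrefl 0 h0
    have h1 : R.inv' (R.seqProd l * R.sRefl j) = l.length + 1 := by
      rw [R.inv_mul_sRefl j hpos, hinv]
    have h2 : R.wordProd (l.reverse ++ [j]) = R.seqProd l * R.sRefl j := by
      rw [R.wordProd_append, hrefl, R.wordProd_singleton]
    have h3 := R.inv_le_len _ h2
    rw [h1] at h3
    rw [hlen]
    omega
/-- Any valid firing sequence `(i_1, …, i_t)` of the Modified Kostant Game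
with active set `I` yields a reduced expression `s_{i_t} ⋯ s_{i_1}`, and the resulting element
belongs to `W^J` for `J = S \\ {s_i : i ∈ I}`. -/
theorem statement0 {n d : ℕ} (R : RootSystemBase n d) (I : Finset (Fin n))
    (l : List (Fin n)) (hl : R.Valid I l) :
    R.len (R.seqProd l) = l.length ∧ R.seqProd l ∈ R.minReps I := by
  exact statement0' R I l hl
end
end

section
/- Let J = S \ {s_i : i ∈ I}. Two valid firing sequences (k_1,…,k_m) and (k'_1,…,k'_{m'}) in the Modified Kostant Game with active set I reach the same configuration if and only if s_{k_m} ⋯ s_{k_1} = s_{k'_{m'}} ⋯ s_{k'_1} in W. Consequently, the map sending a reachable configuration to the Weyl group element s_{k_m} ⋯ s_{k_1} determined by any valid firing sequence reaching it is a well-defined bijection between the set of reachable configurations and W^J. -/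
open scoped Classical RealInnerProductSpace

noncomputable section

variable {n d : ℕ}

/-! ### Auxiliary development for statement2 -/

namespace SKGame

open RootSystemBase

variable {n d : ℕ} (R : RootSystemBase n d)

local notation "E" => EuclideanSpace ℝ (Fin d)

lemma mul_app (f g : E ≃ₗ[ℝ] E) (x : E) : (f * g) x = f (g x) := rfl

lemma one_app (x : E) : (1 : E ≃ₗ[ℝ] E) x = x := rfl

lemma qpos (i : Fin n) : (0:ℝ) < ⟪R.α i, R.α i⟫ :=
  lt_of_le_of_ne real_inner_self_nonneg
    (fun h => R.inner_alpha_ne_zero i h.symm)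

lemma sRefl_apply (i : Fin n) (x : E) :
    R.sRefl i x = x - rsPair x (R.α i) • R.α i := by
  rw [sRefl, Module.reflection_apply]
  rfl

lemma sRefl_alpha_self (i : Fin n) : R.sRefl i (R.α i) = - R.α i := by
  rw [sRefl, Module.reflection_apply_self]

lemma sRefl_mem (i : Fin n) {β : E} (hβ : β ∈ R.Φ) : R.sRefl i β ∈ R.Φ := by
  rw [sRefl_apply]
  exact R.reflClosed β hβ (R.α i) (R.α_mem i)

lemma sRefl_sq (i : Fin n) : R.sRefl i * R.sRefl i = 1 := by
  refine LinearEquiv.ext (fun x => ?_)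
  exact Module.involutive_reflection (R.corootForm_alpha_self i) x

lemma sRefl_inv (i : Fin n) : (R.sRefl i)⁻¹ = R.sRefl i := by
  rw [eq_comm, eq_inv_iff_mul_eq_one, sRefl_sq]

lemma sRefl_orth (i : Fin n) (x y : E) : ⟪R.sRefl i x, R.sRefl i y⟫ = ⟪x, y⟫ := by
  rw [sRefl_apply, sRefl_apply, rsPair, rsPair]
  have hq : ⟪R.α i, R.α i⟫ ≠ 0 := (qpos R i).ne'
  simp only [inner_sub_left, inner_sub_right, real_inner_smul_left, real_inner_smul_right]
  rw [real_inner_comm (R.α i) y, real_inner_comm (R.α i) x]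
  generalize ⟪x, y⟫ = c
  generalize ha : ⟪x, R.α i⟫ = a
  generalize hb : ⟪y, R.α i⟫ = b
  generalize hqq : ⟪R.α i, R.α i⟫ = q at hq
  field_simp
  ring

/-! ### Word products -/

/-- product of simple reflections along a word -/
def wp (L : List (Fin n)) : E ≃ₗ[ℝ] E := (L.map R.sRefl).prod

@[simp] lemma wp_nil : wp R ([] : List (Fin n)) = 1 := rfl

@[simp] lemma wp_cons (i : Fin n) (L : List (Fin n)) :
    wp R (i :: L) = R.sRefl i * wp R L := by
  simp [wp]

lemma wp_append (L L' : List (Fin n)) : wp R (L ++ L') = wp R L * wp R L' := by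
  simp [wp]

lemma wp_concat (L : List (Fin n)) (v : Fin n) :
    wp R (L ++ [v]) = wp R L * R.sRefl v := by
  simp [wp]

lemma wp_mem (L : List (Fin n)) {β : E} (hβ : β ∈ R.Φ) : wp R L β ∈ R.Φ := by
  induction L with
  | nil => exact hβ
  | cons i L ih => rw [wp_cons, mul_app]; exact sRefl_mem R i ih

lemma wp_orth (L : List (Fin n)) (x y : E) : ⟪wp R L x, wp R L y⟫ = ⟪x, y⟫ := by
  induction L with
  | nil => rfl
  | cons i L ih => rw [wp_cons, mul_app, mul_app, sRefl_orth]; exact ih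

lemma wp_inv (L : List (Fin n)) : (wp R L)⁻¹ = wp R L.reverse := by
  induction L with
  | nil => simp
  | cons i L ih =>
    rw [wp_cons, mul_inv_rev, ih, sRefl_inv, List.reverse_cons, wp_concat]

lemma seqProd_eq (l : List (Fin n)) : R.seqProd l = wp R l.reverse := rfl

lemma seqProd_nil : R.seqProd ([] : List (Fin n)) = 1 := rfl

lemma seqProd_concat (l : List (Fin n)) (v : Fin n) :
    R.seqProd (l ++ [v]) = R.sRefl v * R.seqProd l := by
  rw [seqProd_eq, seqProd_eq, List.reverse_append]
  simp [wp]

/-! ### Positive and negative roots -/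

/-- positive root -/
def Pos (β : E) : Prop :=
  β ∈ R.Φ ∧ ∃ c : Fin n → ℤ, β = ∑ i, (c i : ℝ) • R.α i ∧ ∀ i, 0 ≤ c i

/-- negative root -/
def Neg (β : E) : Prop :=
  β ∈ R.Φ ∧ ∃ c : Fin n → ℤ, β = ∑ i, (c i : ℝ) • R.α i ∧ ∀ i, c i ≤ 0

lemma coeff_unique {c c' : Fin n → ℝ}
    (h : ∑ i, c i • R.α i = ∑ i, c' i • R.α i) : c = c' := by
  have h2 : ∑ i, (c i - c' i) • R.α i = 0 := by
    simp only [sub_smul, Finset.sum_sub_distrib, h, sub_self]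
  have h3 := Fintype.linearIndependent_iff.mp R.indep (fun i => c i - c' i) h2
  funext i
  have h4 : c i - c' i = 0 := h3 i
  linarith

lemma neg_mem {β : E} (hβ : β ∈ R.Φ) : -β ∈ R.Φ := by
  have h2 : rsPair β β = 2 := by
    rw [rsPair, mul_div_assoc, div_self, mul_one]
    exact fun h => R.nonzero β hβ (inner_self_eq_zero.mp h)
  have := R.reflClosed β hβ β hβ
  rw [h2] at this
  convert this using 1
  module

lemma trichotomy {β : E} (hβ : β ∈ R.Φ) : Pos R β ∨ Neg R β := by
  obtain ⟨c, hc, hsign⟩ := R.base β hβ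
  rcases hsign with h | h
  · exact Or.inl ⟨hβ, c, hc, h⟩
  · exact Or.inr ⟨hβ, c, hc, h⟩

lemma pos_not_neg {β : E} (hp : Pos R β) : ¬ Neg R β := by
  rintro ⟨hβ, c', hc', hle⟩
  obtain ⟨_, c, hc, hge⟩ := hp
  have : (fun i => (c i : ℝ)) = fun i => (c' i : ℝ) :=
    coeff_unique R (by rw [← hc, ← hc'])
  have hzero : ∀ i, (c i : ℝ) = 0 := by
    intro i
    have h1 := congrFun this i
    have h2 : (0:ℝ) ≤ c i := by exact_mod_cast hge i
    have h3 : (c' i : ℝ) ≤ 0 := by exact_mod_cast hle i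
    linarith
  apply R.nonzero β hβ
  rw [hc]
  refine Finset.sum_eq_zero (fun i _ => ?_)
  rw [hzero i, zero_smul]

lemma neg_iff_pos_neg {β : E} : Neg R β ↔ Pos R (-β) := by
  constructor
  · rintro ⟨hβ, c, hc, hle⟩
    refine ⟨neg_mem R hβ, fun i => -(c i), ?_, fun i => neg_nonneg.mpr (hle i)⟩
    rw [hc, ← Finset.sum_neg_distrib]
    refine Finset.sum_congr rfl (fun i _ => ?_)
    push_cast
    module
  · rintro ⟨hβ, c, hc, hge⟩
    have hβ' : β ∈ R.Φ := by
      have := neg_mem R hβ; rwa [neg_neg] at this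
    refine ⟨hβ', fun i => -(c i), ?_, fun i => neg_nonpos.mpr (hge i)⟩
    have : β = -∑ i, (c i : ℝ) • R.α i := by rw [← hc, neg_neg]
    rw [this, ← Finset.sum_neg_distrib]
    refine Finset.sum_congr rfl (fun i _ => ?_)
    push_cast
    module

lemma single_smul_sum (v : Fin n) (r : ℝ) :
    r • R.α v = ∑ i, (if i = v then r else 0) • R.α i := by
  rw [Finset.sum_eq_single v]
  · rw [if_pos rfl]
  · intro u _ huv; rw [if_neg huv, zero_smul]
  · intro h; exact absurd (Finset.mem_univ v) h

lemma pos_alpha (v : Fin n) : Pos R (R.α v) := by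
  refine ⟨R.α_mem v, fun i => if i = v then 1 else 0, ?_, fun i => by positivity⟩
  have h : ∀ i : Fin n, (((if i = v then 1 else 0 : ℤ)):ℝ) • R.α i
      = (if i = v then (1:ℝ) else 0) • R.α i := by
    intro i; split <;> simp
  rw [Finset.sum_congr rfl (fun i _ => h i), ← single_smul_sum R v 1, one_smul]

lemma neg_alpha_neg (v : Fin n) : Neg R (-R.α v) := by
  rw [neg_iff_pos_neg, neg_neg]; exact pos_alpha R v

lemma pos_sRefl_of_ne {β : E} (v : Fin n) (hp : Pos R β) (hne : β ≠ R.α v) :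
    Pos R (R.sRefl v β) := by
  obtain ⟨hβ, c, hc, hge⟩ := hp
  have hmem : R.sRefl v β ∈ R.Φ := sRefl_mem R v hβ
  -- find u ≠ v with positive coefficient
  have hu : ∃ u, u ≠ v ∧ 0 < c u := by
    by_contra hcon
    push_neg at hcon
    have hzero : ∀ u, u ≠ v → c u = 0 := fun u hu => le_antisymm (hcon u hu) (hge u)
    have hβv : β = (c v : ℝ) • R.α v := by
      rw [hc, Finset.sum_eq_single v]
      · intro u _ huv
        rw [hzero u huv]; simp
      · intro h; exact absurd (Finset.mem_univ v) h
    have := R.reduced (R.α v) (R.α_mem v) (c v) (by rwa [← hβv])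
    rcases this with h1 | h1
    · apply hne; rw [hβv]; rw_mod_cast [h1]; simp
    · have : (0:ℝ) ≤ c v := by exact_mod_cast hge v
      rw [h1] at this; norm_num at this
  obtain ⟨u, huv, hcu⟩ := hu
  rcases trichotomy R hmem with h | h
  · exact h
  · exfalso
    obtain ⟨_, b, hb, hble⟩ := h
    have hs : R.sRefl v β = ∑ i, ((c i : ℝ) - (if i = v then rsPair β (R.α v) else 0)) • R.α i := by
      rw [sRefl_apply, hc]
      rw [Finset.sum_congr rfl (fun i _ => sub_smul _ _ _), Finset.sum_sub_distrib]
      rw [← hc, ← single_smul_sum R v _]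
    have heq := coeff_unique R (c := fun i => (b i : ℝ))
      (c' := fun i => (c i : ℝ) - (if i = v then rsPair β (R.α v) else 0))
      (by rw [← hb, ← hs])
    have := congrFun heq u
    simp only [if_neg huv, sub_zero] at this
    have h1 : (b u : ℝ) ≤ 0 := by exact_mod_cast hble u
    have h2 : (0 : ℝ) < c u := by exact_mod_cast hcu
    linarith

lemma eq_alpha_of_pos_neg {β : E} (v : Fin n) (hp : Pos R β) (hn : Neg R (R.sRefl v β)) :
    β = R.α v := by
  by_contra hne
  exact pos_not_neg R (pos_sRefl_of_ne R v hp hne) hn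

/-! ### Conjugation and the exchange lemma -/

lemma conj_eq (L : List (Fin n)) (j m : Fin n) (h : wp R L (R.α j) = R.α m) :
    wp R L * R.sRefl j * (wp R L)⁻¹ = R.sRefl m := by
  refine LinearEquiv.ext fun x => ?_
  have hx : wp R L ((wp R L)⁻¹ x) = x := LinearEquiv.apply_symm_apply _ x
  have happ : (wp R L * R.sRefl j * (wp R L)⁻¹) x
      = wp R L (R.sRefl j ((wp R L)⁻¹ x)) := rfl
  rw [happ, sRefl_apply, map_sub, map_smul, hx, h]
  have hpair : rsPair ((wp R L)⁻¹ x) (R.α j) = rsPair x (R.α m) := by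
    rw [rsPair, rsPair]
    rw [← wp_orth R L ((wp R L)⁻¹ x) (R.α j), hx, h]
    rw [← wp_orth R L (R.α j) (R.α j), h]
  rw [hpair, sRefl_apply]

lemma exchange : ∀ L : List (Fin n), ∀ j : Fin n, Neg R (wp R L (R.α j)) →
    ∃ L' : List (Fin n), L'.Sublist L ∧ L'.length + 1 = L.length ∧
      wp R L' = wp R L * R.sRefl j := by
  intro L
  induction L with
  | nil =>
    intro j h
    exfalso
    rw [wp_nil, one_app] at h
    exact pos_not_neg R (pos_alpha R j) h
  | cons i L ih =>
    intro j h
    rw [wp_cons, mul_app] at h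
    rcases trichotomy R (wp_mem R L (R.α_mem j)) with hp | hn
    · have heq : wp R L (R.α j) = R.α i := eq_alpha_of_pos_neg R i hp h
      refine ⟨L, List.sublist_cons_self i L, by simp, ?_⟩
      have hconj := conj_eq R L j i heq
      rw [wp_cons, ← hconj, mul_assoc, mul_assoc, mul_assoc, inv_mul_cancel_left,
        sRefl_sq, mul_one]
    · obtain ⟨L', hsub, hlen, hprod⟩ := ih j hn
      refine ⟨i :: L', hsub.cons₂ i, by simp [← hlen], ?_⟩
      rw [wp_cons, wp_cons, mul_assoc, ← hprod]

/-! ### Length machinery -/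

lemma wordProd_eq_wp (L : List (Fin n)) : R.wordProd L = wp R L := rfl

/-- expressibility as a word in the simple reflections -/
def Expr (w : E ≃ₗ[ℝ] E) : Prop := ∃ L : List (Fin n), wp R L = w

lemma expr_one : Expr R (1 : E ≃ₗ[ℝ] E) := ⟨[], rfl⟩

lemma expr_sRefl (i : Fin n) : Expr R (R.sRefl i) := ⟨[i], by simp [wp]⟩

lemma expr_mul {w w' : E ≃ₗ[ℝ] E} (h : Expr R w) (h' : Expr R w') : Expr R (w * w') := by
  obtain ⟨L, hL⟩ := h
  obtain ⟨L', hL'⟩ := h'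
  exact ⟨L ++ L', by rw [wp_append, hL, hL']⟩

lemma expr_inv {w : E ≃ₗ[ℝ] E} (h : Expr R w) : Expr R w⁻¹ := by
  obtain ⟨L, hL⟩ := h
  exact ⟨L.reverse, by rw [← wp_inv, hL]⟩

lemma expr_mem {w : E ≃ₗ[ℝ] E} (h : Expr R w) {β : E} (hβ : β ∈ R.Φ) : w β ∈ R.Φ := by
  obtain ⟨L, hL⟩ := h; rw [← hL]; exact wp_mem R L hβ

lemma expr_orth {w : E ≃ₗ[ℝ] E} (h : Expr R w) (x y : E) : ⟪w x, w y⟫ = ⟪x, y⟫ := by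
  obtain ⟨L, hL⟩ := h; rw [← hL]; exact wp_orth R L x y

lemma exists_min_word {w : E ≃ₗ[ℝ] E} (h : Expr R w) :
    ∃ L : List (Fin n), wp R L = w ∧ L.length = R.len w := by
  obtain ⟨L0, hL0⟩ := h
  have hne : {t | ∃ l : List (Fin n), l.length = t ∧ R.wordProd l = w}.Nonempty :=
    ⟨L0.length, L0, rfl, hL0⟩
  obtain ⟨L, hlen, hw⟩ := Nat.sInf_mem hne
  exact ⟨L, hw, hlen⟩

lemma len_le (L : List (Fin n)) : R.len (wp R L) ≤ L.length :=
  Nat.sInf_le ⟨L, rfl, rfl⟩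

lemma len_lt_of_neg {w : E ≃ₗ[ℝ] E} (h : Expr R w) {j : Fin n}
    (hn : Neg R (w (R.α j))) : R.len (w * R.sRefl j) < R.len w := by
  obtain ⟨L, hL, hlen⟩ := exists_min_word R h
  rw [← hL] at hn
  obtain ⟨L', _, hlen', hprod⟩ := exchange R L j hn
  have := len_le R L'
  rw [hprod, hL] at this
  omega

lemma len_lt_of_pos {w : E ≃ₗ[ℝ] E} (h : Expr R w) {j : Fin n}
    (hp : Pos R (w (R.α j))) : R.len w < R.len (w * R.sRefl j) := by
  have h' : Expr R (w * R.sRefl j) := expr_mul R h (expr_sRefl R j)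
  have hn : Neg R ((w * R.sRefl j) (R.α j)) := by
    rw [mul_app, sRefl_alpha_self, map_neg, neg_iff_pos_neg, neg_neg]
    exact hp
  have := len_lt_of_neg R h' hn
  rwa [mul_assoc, sRefl_sq, mul_one] at this

lemma len_inv (w : E ≃ₗ[ℝ] E) : R.len w⁻¹ = R.len w := by
  unfold RootSystemBase.len
  congr 1
  ext t
  constructor
  · rintro ⟨L, hlen, hw⟩
    refine ⟨L.reverse, by simp [hlen], ?_⟩
    show wp R L.reverse = w
    rw [show R.wordProd L = wp R L from rfl] at hw
    rw [← wp_inv, hw, inv_inv]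
  · rintro ⟨L, hlen, hw⟩
    refine ⟨L.reverse, by simp [hlen], ?_⟩
    show wp R L.reverse = w⁻¹
    rw [show R.wordProd L = wp R L from rfl] at hw
    rw [← wp_inv, hw]

lemma eq_one_of_all_pos {w : E ≃ₗ[ℝ] E} (h : Expr R w)
    (hp : ∀ v, Pos R (w (R.α v))) : w = 1 := by
  obtain ⟨L, hL, hlen⟩ := exists_min_word R h
  rcases eq_or_ne L [] with hnil | hne
  · rw [← hL, hnil, wp_nil]
  · exfalso
    set v := L.getLast hne with hv
    have hsplit : L.dropLast ++ [v] = L := List.dropLast_append_getLast hne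
    have hws : w * R.sRefl v = wp R L.dropLast := by
      rw [← hL, ← hsplit, wp_concat, mul_assoc, sRefl_sq, mul_one, hsplit]
    have h1 : R.len (w * R.sRefl v) ≤ L.length - 1 := by
      have := len_le R L.dropLast
      rw [← hws] at this
      simpa [List.length_dropLast] using this
    have h2 := len_lt_of_pos R h (hp v)
    omega

/-! ### The antidominant weight λ -/

/-- the defining property of our weight `λ` -/
def IsLam (I : Finset (Fin n)) (lam : E) : Prop :=
  ∀ i, ⟪lam, R.α i⟫ = (if i ∈ I then -⟪R.α i, R.α i⟫/2 else 0)

lemma exists_lam (I : Finset (Fin n)) : ∃ lam : E, IsLam R I lam := by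
  classical
  set M : Matrix (Fin n) (Fin n) ℝ := Matrix.of (fun i j => ⟪R.α j, R.α i⟫) with hM
  have hinj : Function.Injective M.mulVecLin := by
    rw [← LinearMap.ker_eq_bot, LinearMap.ker_eq_bot']
    intro c hc
    have hc' : ∀ i, ⟪∑ j, c j • R.α j, R.α i⟫ = 0 := by
      intro i
      have h1 : M.mulVecLin c i = 0 := by rw [hc]; rfl
      rw [Matrix.mulVecLin_apply, Matrix.mulVec, dotProduct] at h1
      rw [sum_inner]
      rw [← h1]
      refine Finset.sum_congr rfl (fun j _ => ?_)
      rw [real_inner_smul_left, hM]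
      simp [mul_comm]
    have hx : (∑ j, c j • R.α j) = 0 := by
      have h0 : ⟪∑ j, c j • R.α j, ∑ j, c j • R.α j⟫ = (0:ℝ) := by
        rw [inner_sum]
        refine Finset.sum_eq_zero (fun j _ => ?_)
        rw [real_inner_smul_right, hc' j, mul_zero]
      exact inner_self_eq_zero.mp h0
    exact funext (Fintype.linearIndependent_iff.mp R.indep c hx)
  have hsurj : Function.Surjective M.mulVecLin :=
    LinearMap.injective_iff_surjective.mp hinj
  obtain ⟨c, hc⟩ := hsurj (fun i => if i ∈ I then -⟪R.α i, R.α i⟫/2 else 0)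
  refine ⟨∑ j, c j • R.α j, fun i => ?_⟩
  have h1 : M.mulVecLin c i = (if i ∈ I then -⟪R.α i, R.α i⟫/2 else 0) := by rw [hc]
  rw [Matrix.mulVecLin_apply, Matrix.mulVec, dotProduct] at h1
  rw [sum_inner, ← h1]
  refine Finset.sum_congr rfl (fun j _ => ?_)
  rw [real_inner_smul_left, hM]
  simp [mul_comm]

variable {I : Finset (Fin n)} {lam : EuclideanSpace ℝ (Fin d)}

lemma lam_alpha_nonpos (hlam : IsLam R I lam) (i : Fin n) : ⟪lam, R.α i⟫ ≤ 0 := by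
  rw [hlam i]
  split
  · have := qpos R i; linarith
  · exact le_rfl

lemma lam_alpha_eq_zero_iff (hlam : IsLam R I lam) (i : Fin n) :
    ⟪lam, R.α i⟫ = 0 ↔ i ∉ I := by
  rw [hlam i]
  split <;> rename_i h
  · have := qpos R i
    constructor
    · intro h2; linarith
    · intro h2; exact absurd h h2
  · simp [h]

lemma lam_pos_nonpos (hlam : IsLam R I lam) {β : E} (hp : Pos R β) : ⟪lam, β⟫ ≤ 0 := by
  obtain ⟨_, c, hc, hge⟩ := hp
  rw [hc, inner_sum]
  refine Finset.sum_nonpos (fun i _ => ?_)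
  rw [real_inner_smul_right]
  have h1 : (0:ℝ) ≤ c i := by exact_mod_cast hge i
  exact mul_nonpos_of_nonneg_of_nonpos h1 (lam_alpha_nonpos R hlam i)

lemma lam_neg_nonneg (hlam : IsLam R I lam) {β : E} (hn : Neg R β) : 0 ≤ ⟪lam, β⟫ := by
  have := lam_pos_nonpos R hlam ((neg_iff_pos_neg R).mp hn)
  rw [inner_neg_right] at this
  linarith

/-- if a positive root is orthogonal to λ then all its modified coefficients vanish -/
lemma lam_pos_coeff_zero (hlam : IsLam R I lam) {β : E} {c : Fin n → ℤ}
    (hc : β = ∑ i, (c i : ℝ) • R.α i) (hge : ∀ i, 0 ≤ c i)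
    (horth : ⟪lam, β⟫ = 0) (i : Fin n) (hi : i ∈ I) : c i = 0 := by
  have hterm : ∀ j : Fin n, (c j : ℝ) * ⟪lam, R.α j⟫ ≤ 0 := by
    intro j
    have h1 : (0:ℝ) ≤ c j := by exact_mod_cast hge j
    exact mul_nonpos_of_nonneg_of_nonpos h1 (lam_alpha_nonpos R hlam j)
  have hsum : ∑ j, (c j : ℝ) * ⟪lam, R.α j⟫ = 0 := by
    rw [← horth, hc, inner_sum]
    refine Finset.sum_congr rfl (fun j _ => ?_)
    rw [real_inner_smul_right]
  have hall := (Finset.sum_eq_zero_iff_of_nonpos (fun j _ => hterm j)).mp hsum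
  have hzero : (c i : ℝ) * ⟪lam, R.α i⟫ = 0 := hall i (Finset.mem_univ i)
  have hne : ⟪lam, R.α i⟫ ≠ 0 := by
    rw [hlam i, if_pos hi]
    have := qpos R i
    intro h; rw [eq_comm] at h; nlinarith
  have : (c i : ℝ) = 0 := by
    rcases mul_eq_zero.mp hzero with h | h
    · exact h
    · exact absurd h hne
  exact_mod_cast this

lemma sRefl_fix_lam (v : Fin n) (h : ⟪lam, R.α v⟫ = 0) : R.sRefl v lam = lam := by
  rw [sRefl_apply, rsPair, h]
  simp

/-! ### Game dictionary -/

/-- the vector of a configuration -/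
def cfg2vec (c : Fin n → ℤ) : EuclideanSpace ℝ (Fin d) := ∑ u, (c u : ℝ) • R.α u

lemma cartan_cast (u v : Fin n) : ((R.cartan u v : ℤ) : ℝ) = rsPair (R.α u) (R.α v) := by
  obtain ⟨k, hk⟩ := R.crystallographic (R.α u) (R.α_mem u) (R.α v) (R.α_mem v)
  rw [cartan, hk]
  norm_num

lemma cartan_self (v : Fin n) : R.cartan v v = 2 := by
  have h : rsPair (R.α v) (R.α v) = 2 := by
    rw [rsPair, mul_div_assoc, div_self (qpos R v).ne', mul_one]
  rw [cartan, h]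
  norm_num

lemma chip_identity (I : Finset (Fin n)) (c : Fin n → ℤ) (v : Fin n) :
    2 * c v - R.chipBound I c v
      = ∑ u, R.cartan u v * c u - (if v ∈ I then 1 else 0) := by
  rw [chipBound]
  rw [← Finset.add_sum_erase Finset.univ (fun u => R.cartan u v * c u) (Finset.mem_univ v)]
  rw [cartan_self]
  have : ∑ u ∈ Finset.univ.erase v, -R.cartan u v * c u
      = - ∑ u ∈ Finset.univ.erase v, R.cartan u v * c u := by
    rw [← Finset.sum_neg_distrib]
    exact Finset.sum_congr rfl (fun u _ => by ring)
  rw [this]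
  ring

variable {I : Finset (Fin n)} {lam : EuclideanSpace ℝ (Fin d)}

lemma rsPair_add (x y γ : EuclideanSpace ℝ (Fin d)) :
    rsPair (x + y) γ = rsPair x γ + rsPair y γ := by
  rw [rsPair, rsPair, rsPair, inner_add_left, mul_add, add_div]

lemma rsPair_smul (r : ℝ) (x γ : EuclideanSpace ℝ (Fin d)) :
    rsPair (r • x) γ = r * rsPair x γ := by
  rw [rsPair, rsPair, real_inner_smul_left]
  ring

lemma pair_lam_cfg (hlam : IsLam R I lam) (c : Fin n → ℤ) (v : Fin n) :
    rsPair (lam + cfg2vec R c) (R.α v)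
      = ((2 * c v - R.chipBound I c v : ℤ) : ℝ) := by
  rw [chip_identity]
  push_cast
  rw [rsPair_add]
  have hsum : rsPair (cfg2vec R c) (R.α v) = ∑ u, (R.cartan u v : ℝ) * (c u : ℝ) := by
    rw [cfg2vec, rsPair, sum_inner, Finset.mul_sum, Finset.sum_div]
    refine Finset.sum_congr rfl (fun u _ => ?_)
    rw [cartan_cast, rsPair, real_inner_smul_left]
    ring
  have hlamv : rsPair lam (R.α v) = -(if v ∈ I then (1:ℝ) else 0) := by
    rw [rsPair, hlam v]
    have hq := (qpos R v).ne'
    generalize hqq : ⟪R.α v, R.α v⟫ = q at hq ⊢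
    split
    · field_simp
    · simp
  rw [hsum, hlamv]
  ring

lemma sad_iff (hlam : IsLam R I lam) (c : Fin n → ℤ) (v : Fin n) :
    R.Sad I c v ↔ ⟪lam + cfg2vec R c, R.α v⟫ < 0 := by
  have hp := pair_lam_cfg R hlam c v
  rw [rsPair] at hp
  have hq := qpos R v
  constructor
  · intro hs
    rw [Sad] at hs
    have h1 : ((2 * c v - R.chipBound I c v : ℤ) : ℝ) < 0 := by
      have : (2 * c v - R.chipBound I c v : ℤ) < 0 := by omega
      exact_mod_cast this
    rw [← hp] at h1
    have := div_neg_iff.mp h1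
    rcases this with ⟨h2, h3⟩ | ⟨h2, h3⟩
    · linarith
    · linarith
  · intro hs
    rw [Sad]
    have h1 : 2 * ⟪lam + cfg2vec R c, R.α v⟫ / ⟪R.α v, R.α v⟫ < 0 :=
      div_neg_of_neg_of_pos (by linarith) hq
    rw [hp] at h1
    have : (2 * c v - R.chipBound I c v : ℤ) < 0 := by exact_mod_cast h1
    omega

lemma fire_vec (hlam : IsLam R I lam) (c : Fin n → ℤ) (v : Fin n) :
    lam + cfg2vec R (R.fire I c v) = R.sRefl v (lam + cfg2vec R c) := by
  rw [sRefl_apply, pair_lam_cfg R hlam c v]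
  have hupd : cfg2vec R (R.fire I c v)
      = cfg2vec R c + ((R.chipBound I c v - 2 * c v : ℤ) : ℝ) • R.α v := by
    have h1 : ∀ u ∈ Finset.univ.erase v,
        ((Function.update c v (R.chipBound I c v - c v) u : ℤ) : ℝ) • R.α u
          = ((c u : ℤ) : ℝ) • R.α u := by
      intro u hu
      rw [Function.update_of_ne (Finset.ne_of_mem_erase hu)]
    rw [cfg2vec, cfg2vec, fire,
      ← Finset.add_sum_erase Finset.univ
        (fun u => ((Function.update c v (R.chipBound I c v - c v) u : ℤ) : ℝ) • R.α u)
        (Finset.mem_univ v),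
      ← Finset.add_sum_erase Finset.univ (fun u => ((c u : ℤ) : ℝ) • R.α u)
        (Finset.mem_univ v),
      Finset.sum_congr rfl h1, Function.update_self]
    push_cast
    module
  rw [hupd]
  push_cast
  have : ((R.chipBound I c v : ℝ) - 2 * (c v : ℝ)) = -((2 * (c v:ℝ) - R.chipBound I c v)) := by ring
  rw [this, neg_smul]
  abel

lemma play_concat (l : List (Fin n)) (v : Fin n) :
    R.play I (l ++ [v]) = R.fire I (R.play I l) v := by
  rw [play, play, List.foldl_append]
  rfl

lemma play_nil : R.play I ([] : List (Fin n)) = 0 := rfl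

lemma cfg2vec_zero : cfg2vec R (0 : Fin n → ℤ) = 0 := by
  rw [cfg2vec]
  refine Finset.sum_eq_zero (fun u _ => ?_)
  simp

lemma play_vec (hlam : IsLam R I lam) (l : List (Fin n)) :
    lam + cfg2vec R (R.play I l) = R.seqProd l lam := by
  induction l using List.reverseRecOn with
  | nil => rw [play_nil, cfg2vec_zero, add_zero]; rfl
  | append_singleton l v ih =>
    rw [play_concat, fire_vec R hlam, ih, seqProd_concat, mul_app]

lemma validFrom_concat {c : Fin n → ℤ} {l : List (Fin n)} {v : Fin n}
    (h : R.ValidFrom I c l) (hs : R.Sad I (l.foldl (R.fire I) c) v) :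
    R.ValidFrom I c (l ++ [v]) := by
  induction l generalizing c with
  | nil => exact ⟨hs, trivial⟩
  | cons u l ih =>
    obtain ⟨h1, h2⟩ := h
    exact ⟨h1, ih h2 hs⟩

lemma valid_concat {l : List (Fin n)} {v : Fin n}
    (h : R.Valid I l) (hs : R.Sad I (R.play I l) v) : R.Valid I (l ++ [v]) :=
  validFrom_concat R h hs

/-! ### Validity invariant and part 1 -/

lemma valid_Q (hlam : IsLam R I lam) :
    ∀ l m : List (Fin n), R.ValidFrom I (R.play I m) l →
    (∀ γ, Pos R γ → ⟪lam, γ⟫ = 0 → Pos R (R.seqProd m γ)) →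
    ∀ γ, Pos R γ → ⟪lam, γ⟫ = 0 → Pos R (R.seqProd (m ++ l) γ) := by
  intro l
  induction l with
  | nil =>
    intro m _ hQ γ h1 h2
    rw [List.append_nil]
    exact hQ γ h1 h2
  | cons v l ih =>
    intro m h hQ γ h1 h2
    obtain ⟨hsad, hrest⟩ := h
    have hrest' : R.ValidFrom I (R.play I (m ++ [v])) l := by rwa [play_concat]
    have hQ' : ∀ γ, Pos R γ → ⟪lam, γ⟫ = 0 → Pos R (R.seqProd (m ++ [v]) γ) := by
      intro γ hg1 hg2
      rw [seqProd_concat, mul_app]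
      have hp := hQ γ hg1 hg2
      have hmem : R.sRefl v (R.seqProd m γ) ∈ R.Φ := sRefl_mem R v hp.1
      rcases trichotomy R hmem with hpos | hneg
      · exact hpos
      · exfalso
        have heq : R.seqProd m γ = R.α v := eq_alpha_of_pos_neg R v hp hneg
        have hsadiff := (sad_iff R hlam (R.play I m) v).mp hsad
        rw [play_vec R hlam] at hsadiff
        have horth : ⟪R.seqProd m lam, R.α v⟫ = 0 := by
          rw [← heq, seqProd_eq, wp_orth R m.reverse lam γ]
          exact hg2
        linarith
    have hsplit : m ++ v :: l = (m ++ [v]) ++ l := by simp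
    rw [hsplit]
    exact ih (m ++ [v]) hrest' hQ' γ h1 h2

lemma valid_pos (hlam : IsLam R I lam) {l : List (Fin n)} (hv : R.Valid I l) :
    ∀ γ, Pos R γ → ⟪lam, γ⟫ = 0 → Pos R (R.seqProd l γ) := by
  have h0 : R.ValidFrom I (R.play I []) l := hv
  have := valid_Q R hlam l [] h0 (fun γ h1 _ => by rw [seqProd_nil, one_app]; exact h1)
  simpa using this

lemma stab_word (hlam : IsLam R I lam) :
    ∀ t : ℕ, ∀ L : List (Fin n), L.length ≤ t → wp R L lam = lam →
    ∃ L' : List (Fin n), (∀ j ∈ L', j ∉ I) ∧ wp R L' = wp R L := by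
  intro t
  induction t with
  | zero =>
    intro L hle _
    have hnil : L = [] := List.length_eq_zero_iff.mp (Nat.le_zero.mp hle)
    exact ⟨[], by simp, by rw [hnil]⟩
  | succ t ih =>
    intro L hle hfix
    obtain ⟨M, hM, hMlen⟩ := exists_min_word R ⟨L, rfl⟩
    rcases eq_or_ne M [] with hnil | hne
    · refine ⟨[], by simp, ?_⟩
      rw [← hM, hnil, wp_nil]
    · set v := M.getLast hne with hv
      have hsplit : M.dropLast ++ [v] = M := List.dropLast_append_getLast hne
      have hws : wp R L * R.sRefl v = wp R M.dropLast := by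
        rw [← hM, ← hsplit, wp_concat, mul_assoc, sRefl_sq, mul_one, hsplit]
      have hneg : Neg R (wp R L (R.α v)) := by
        rcases trichotomy R (wp_mem R L (R.α_mem v)) with hpos | hn
        · exfalso
          have h2 := len_lt_of_pos R ⟨L, rfl⟩ hpos
          have h3 := len_le R M.dropLast
          rw [← hws] at h3
          have h4 : M.dropLast.length = M.length - 1 := List.length_dropLast (xs := M)
          have h6 : 1 ≤ M.length := List.length_pos_iff.mpr hne
          omega
        · exact hn
      have h0 : ⟪lam, R.α v⟫ = 0 := by
        have e1 : ⟪lam, wp R L (R.α v)⟫ = ⟪lam, R.α v⟫ := by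
          conv_lhs => rw [← hfix]
          exact wp_orth R L lam (R.α v)
        have e2 := lam_neg_nonneg R hlam hneg
        have e3 := lam_alpha_nonpos R hlam v
        linarith
      have hvI : v ∉ I := (lam_alpha_eq_zero_iff R hlam v).mp h0
      have hfix' : wp R M.dropLast lam = lam := by
        rw [← hws, mul_app, sRefl_fix_lam R v h0, hfix]
      have hlen' : M.dropLast.length ≤ t := by
        have h4 : M.dropLast.length = M.length - 1 := List.length_dropLast (xs := M)
        have h5 := len_le R L
        have h6 : 1 ≤ M.length := List.length_pos_iff.mpr hne
        omega
      obtain ⟨L'', hL''I, hL''⟩ := ih M.dropLast hlen' hfix'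
      refine ⟨L'' ++ [v], ?_, ?_⟩
      · intro j hj
        rcases List.mem_append.mp hj with h | h
        · exact hL''I j h
        · rw [List.mem_singleton.mp h]; exact hvI
      · rw [wp_concat, hL'', ← hws, mul_assoc, sRefl_sq, mul_one]

lemma jword_descent :
    ∀ t : ℕ, ∀ L : List (Fin n), L.length ≤ t → (∀ j ∈ L, j ∉ I) → wp R L ≠ 1 →
    ∃ j, j ∉ I ∧ Neg R (wp R L (R.α j)) := by
  intro t
  induction t with
  | zero =>
    intro L h1 _ h3
    exfalso
    have hnil : L = [] := List.length_eq_zero_iff.mp (Nat.le_zero.mp h1)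
    exact h3 (by rw [hnil, wp_nil])
  | succ t ih =>
    intro L hle hJ hne1
    have hne : L ≠ [] := by rintro rfl; exact hne1 (by rw [wp_nil])
    set v := L.getLast hne with hv
    have hvmem : v ∈ L := List.getLast_mem hne
    have hsplit : L.dropLast ++ [v] = L := List.dropLast_append_getLast hne
    rcases trichotomy R (wp_mem R L (R.α_mem v)) with hpos | hneg
    · have hdrop : wp R L.dropLast = wp R L * R.sRefl v := by
        rw [← hsplit, wp_concat, mul_assoc, sRefl_sq, mul_one, hsplit]
      have hneg' : Neg R (wp R L.dropLast (R.α v)) := by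
        rw [hdrop, mul_app, sRefl_alpha_self, map_neg, neg_iff_pos_neg, neg_neg]
        exact hpos
      obtain ⟨L₁, hsub, hlen₁, hprod⟩ := exchange R L.dropLast v hneg'
      have hL₁ : wp R L₁ = wp R L := by
        rw [hprod, hdrop, mul_assoc, sRefl_sq, mul_one]
      have hlen2 : L₁.length ≤ t := by
        have h4 : L.dropLast.length = L.length - 1 := List.length_dropLast (xs := L)
        omega
      have hJ1 : ∀ j ∈ L₁, j ∉ I := by
        intro j hj
        exact hJ j (List.Sublist.mem hj (hsub.trans (List.dropLast_sublist L)))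
      obtain ⟨j, hjI, hnegj⟩ := ih L₁ hlen2 hJ1 (by rw [hL₁]; exact hne1)
      rw [hL₁] at hnegj
      exact ⟨j, hjI, hnegj⟩
    · exact ⟨v, hJ v hvmem, hneg⟩

lemma expr_seqProd (l : List (Fin n)) : Expr R (R.seqProd l) := ⟨l.reverse, rfl⟩

lemma part1 (hlam : IsLam R I lam) {l l' : List (Fin n)}
    (hv : R.Valid I l) (hv' : R.Valid I l') :
    R.play I l = R.play I l' ↔ R.seqProd l = R.seqProd l' := by
  constructor
  · intro h
    have horb : R.seqProd l lam = R.seqProd l' lam := by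
      rw [← play_vec R hlam, ← play_vec R hlam, h]
    set w := R.seqProd l with hw
    set w' := R.seqProd l' with hw'
    have hufix : (w⁻¹ * w') lam = lam := by
      rw [mul_app, ← horb]
      exact w.symm_apply_apply lam
    have hword : w⁻¹ * w' = wp R (l ++ l'.reverse) := by
      rw [wp_append, hw, hw', seqProd_eq, seqProd_eq, wp_inv, List.reverse_reverse]
    obtain ⟨L', hL'I, hL'⟩ := stab_word R hlam (l ++ l'.reverse).length (l ++ l'.reverse)
      le_rfl (by rw [← hword]; exact hufix)
    rw [← hword] at hL'
    rcases eq_or_ne (w⁻¹ * w') 1 with h1 | h1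
    · exact (inv_mul_eq_one.mp h1)
    · exfalso
      obtain ⟨j, hjI, hnegj⟩ := jword_descent R L'.length L' le_rfl hL'I
        (by rw [hL']; exact h1)
      rw [hL'] at hnegj
      have hQ := valid_pos R hlam hv
      have hQ' := valid_pos R hlam hv'
      have hδpos : Pos R (-((w⁻¹ * w') (R.α j))) := (neg_iff_pos_neg R).mp hnegj
      have hδorth : ⟪lam, -((w⁻¹ * w') (R.α j))⟫ = 0 := by
        rw [inner_neg_right]
        have horth2 : ⟪(w⁻¹ * w') lam, (w⁻¹ * w') (R.α j)⟫ = ⟪lam, R.α j⟫ :=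
          expr_orth R ⟨L', hL'⟩ lam (R.α j)
        rw [hufix] at horth2
        rw [horth2, (lam_alpha_eq_zero_iff R hlam j).mpr hjI]
        ring
      have h3 := hQ _ hδpos hδorth
      have h4 := hQ' (R.α j) (pos_alpha R j) ((lam_alpha_eq_zero_iff R hlam j).mpr hjI)
      have h5 : w (-((w⁻¹ * w') (R.α j))) = -(w' (R.α j)) := by
        rw [map_neg, mul_app]
        congr 1
        exact w.apply_symm_apply (w' (R.α j))
      rw [h5] at h3
      exact pos_not_neg R h4 ((neg_iff_pos_neg R).mpr h3)
  · intro h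
    have h1 : lam + cfg2vec R (R.play I l) = lam + cfg2vec R (R.play I l') := by
      rw [play_vec R hlam, play_vec R hlam, h]
    have h2 : cfg2vec R (R.play I l) = cfg2vec R (R.play I l') := by
      exact add_left_cancel h1
    have h3 := coeff_unique R (c := fun u => ((R.play I l u : ℤ) : ℝ))
      (c' := fun u => ((R.play I l' u : ℤ) : ℝ)) h2
    funext u
    have := congrFun h3 u
    exact_mod_cast this

/-! ### Weyl group membership and expressibility -/

lemma expr_of_weyl {w : E ≃ₗ[ℝ] E} (h : w ∈ R.weyl) : Expr R w := by
  refine Subgroup.closure_induction (p := fun g _ => Expr R g) ?_ (expr_one R) ?_ ?_ h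
  · rintro x ⟨i, rfl⟩
    exact expr_sRefl R i
  · intro x y _ _ hx hy
    exact expr_mul R hx hy
  · intro x _ hx
    exact expr_inv R hx

lemma seqProd_mem_weyl (l : List (Fin n)) : R.seqProd l ∈ R.weyl := by
  refine Subgroup.list_prod_mem _ (fun x hx => ?_)
  obtain ⟨i, _, rfl⟩ := List.mem_map.mp hx
  exact Subgroup.subset_closure ⟨i, rfl⟩

lemma sRefl_mem_weyl (i : Fin n) : R.sRefl i ∈ R.weyl :=
  Subgroup.subset_closure ⟨i, rfl⟩

lemma apply_inv_app (w : E ≃ₗ[ℝ] E) (x : E) : w (w⁻¹ x) = x := w.apply_symm_apply x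

lemma inv_apply_app (w : E ≃ₗ[ℝ] E) (x : E) : w⁻¹ (w x) = x := w.symm_apply_apply x

lemma sRefl_app_app (v : Fin n) (x : E) : R.sRefl v (R.sRefl v x) = x :=
  Module.involutive_reflection (R.corootForm_alpha_self v) x

lemma sRefl_selfadj (v : Fin n) (x y : E) : ⟪R.sRefl v x, y⟫ = ⟪x, R.sRefl v y⟫ := by
  have h := sRefl_orth R v x (R.sRefl v y)
  rw [sRefl_app_app] at h
  exact h

/-! ### Minimal coset representatives map λ-orthogonal positive roots to positive roots -/

lemma minrep_pos (hlam : IsLam R I lam) {w : E ≃ₗ[ℝ] E} (hwE : Expr R w)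
    (hdesc : ∀ j, j ∉ I → R.len w < R.len (w * R.sRefl j)) :
    ∀ N : ℕ, ∀ γ : EuclideanSpace ℝ (Fin d), ∀ c : Fin n → ℤ,
      γ ∈ R.Φ → γ = ∑ i, (c i : ℝ) • R.α i → (∀ i, 0 ≤ c i) →
      (∑ i, c i).toNat ≤ N → ⟪lam, γ⟫ = 0 → Pos R (w γ) := by
  intro N
  induction N using Nat.strong_induction_on with
  | _ N ihN =>
  intro γ c hγΦ hγc hge hht horth
  -- j ∉ I gives positivity of w (α j)
  have hwj : ∀ j, j ∉ I → Pos R (w (R.α j)) := by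
    intro j hjI
    rcases trichotomy R (expr_mem R hwE (R.α_mem j)) with h | h
    · exact h
    · exfalso
      have h1 := len_lt_of_neg R hwE h
      have h2 := hdesc j hjI
      omega
  by_cases hsimple : ∃ j, γ = R.α j
  · obtain ⟨j, rfl⟩ := hsimple
    exact hwj j ((lam_alpha_eq_zero_iff R hlam j).mp horth)
  · -- find j with c j > 0 and ⟪γ, α j⟫ > 0
    have hγne : γ ≠ 0 := R.nonzero γ hγΦ
    have hγq : (0:ℝ) < ⟪γ, γ⟫ := lt_of_le_of_ne real_inner_self_nonneg
      (fun hh => hγne (inner_self_eq_zero.mp hh.symm))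
    have hjex : ∃ j, 0 < c j ∧ 0 < ⟪γ, R.α j⟫ := by
      by_contra hcon
      push_neg at hcon
      have hterm : ∀ j : Fin n, (c j : ℝ) * ⟪γ, R.α j⟫ ≤ 0 := by
        intro j
        rcases lt_or_ge 0 (c j) with h | h
        · have h2 := hcon j h
          have h3 : (0:ℝ) < c j := by exact_mod_cast h
          exact mul_nonpos_of_nonneg_of_nonpos h3.le h2
        · have h2 : c j = 0 := le_antisymm h (hge j)
          rw [h2]; simp
      have : ⟪γ, γ⟫ ≤ 0 := by
        nth_rewrite 2 [hγc]
        rw [inner_sum]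
        refine Finset.sum_nonpos (fun j _ => ?_)
        rw [real_inner_smul_right]
        exact hterm j
      linarith
    obtain ⟨j, hcj, hγj⟩ := hjex
    obtain ⟨k, hk⟩ := R.crystallographic γ hγΦ (R.α j) (R.α_mem j)
    have hkpos : 0 < k := by
      have h1 : 0 < rsPair γ (R.α j) := by
        rw [rsPair]
        exact div_pos (by linarith) (qpos R j)
      rw [hk] at h1
      exact_mod_cast h1
    have hγnej : γ ≠ R.α j := fun hh => hsimple ⟨j, hh⟩
    have hγpos : Pos R γ := ⟨hγΦ, c, hγc, hge⟩
    have hγ'pos := pos_sRefl_of_ne R j hγpos hγnej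
    obtain ⟨hγ'Φ, b, hb, hbge⟩ := hγ'pos
    -- the coefficients of γ' = s_j γ
    have hγ'c : R.sRefl j γ = ∑ i, ((c i : ℝ) - (if i = j then (k:ℝ) else 0)) • R.α i := by
      rw [sRefl_apply, hk, hγc]
      rw [Finset.sum_congr rfl (fun i _ => sub_smul _ _ _), Finset.sum_sub_distrib]
      rw [← hγc, ← single_smul_sum R j _]
    have hbc : ∀ i, (b i : ℝ) = (c i : ℝ) - (if i = j then (k:ℝ) else 0) := by
      intro i
      exact congrFun (coeff_unique R (c := fun i => (b i : ℝ))
        (c' := fun i => (c i : ℝ) - (if i = j then (k:ℝ) else 0)) (by rw [← hb, ← hγ'c])) i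
    have hbint : ∀ i, b i = c i - (if i = j then k else 0) := by
      intro i
      have := hbc i
      have h2 : ((c i - (if i = j then k else 0) : ℤ) : ℝ)
          = (c i : ℝ) - (if i = j then (k:ℝ) else 0) := by
        push_cast
        split <;> simp
      rw [← h2] at this
      exact_mod_cast this
    -- lam ⊥ α j, hence j ∉ I
    have hlamj : ⟪lam, R.α j⟫ = 0 := by
      have hterm : ∀ u : Fin n, (c u : ℝ) * ⟪lam, R.α u⟫ ≤ 0 := by
        intro u
        have h1 : (0:ℝ) ≤ c u := by exact_mod_cast hge u
        exact mul_nonpos_of_nonneg_of_nonpos h1 (lam_alpha_nonpos R hlam u)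
      have hsum : ∑ u, (c u : ℝ) * ⟪lam, R.α u⟫ = 0 := by
        rw [← horth, hγc, inner_sum]
        refine Finset.sum_congr rfl (fun u _ => ?_)
        rw [real_inner_smul_right]
      have hall := (Finset.sum_eq_zero_iff_of_nonpos (fun u _ => hterm u)).mp hsum
      have hzero := hall j (Finset.mem_univ j)
      have hcj' : (c j : ℝ) ≠ 0 := by
        have : (0:ℝ) < c j := by exact_mod_cast hcj
        linarith
      rcases mul_eq_zero.mp hzero with h | h
      · exact absurd h hcj'
      · exact h
    have hjI : j ∉ I := (lam_alpha_eq_zero_iff R hlam j).mp hlamj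
    -- lam ⊥ γ'
    have horth' : ⟪lam, R.sRefl j γ⟫ = 0 := by
      rw [sRefl_apply, hk, inner_sub_right, real_inner_smul_right, horth, hlamj]
      ring
    -- height decreases
    have hsum_b : ∑ i, b i = (∑ i, c i) - k := by
      rw [Finset.sum_congr rfl (fun i _ => hbint i), Finset.sum_sub_distrib]
      congr 1
      rw [Finset.sum_ite_eq' Finset.univ j (fun _ => k)]
      simp
    have hhtb : (∑ i, b i).toNat < (∑ i, c i).toNat := by
      have h1 : 0 ≤ ∑ i, b i := Finset.sum_nonneg (fun i _ => hbge i)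
      omega
    have hN : 0 < N := by
      have h1 : 0 ≤ ∑ i, b i := Finset.sum_nonneg (fun i _ => hbge i)
      omega
    -- apply induction to γ'
    have hwγ' : Pos R (w (R.sRefl j γ)) :=
      ihN (N - 1) (by omega) (R.sRefl j γ) b hγ'Φ hb hbge (by omega) horth'
    -- reconstruct
    have hγdecomp : γ = R.sRefl j γ + (k : ℝ) • R.α j := by
      rw [sRefl_apply, hk]
      abel
    have hwdecomp : w γ = w (R.sRefl j γ) + (k : ℝ) • w (R.α j) := by
      conv_lhs => rw [hγdecomp]
      rw [map_add, map_smul]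
    have hwαj := hwj j hjI
    rcases trichotomy R (expr_mem R hwE hγΦ) with hfin | hfin
    · exact hfin
    · exfalso
      obtain ⟨hwγΦ, a, ha, hale⟩ := hfin
      obtain ⟨_, p, hp, hpge⟩ := hwγ'
      obtain ⟨_, e, he, heine⟩ := hwαj
      have hcomb : w γ = ∑ i, ((p i : ℝ) + (k : ℝ) * (e i : ℝ)) • R.α i := by
        rw [hwdecomp, hp, he, Finset.smul_sum, ← Finset.sum_add_distrib]
        refine Finset.sum_congr rfl (fun i _ => ?_)
        rw [smul_smul, add_smul]
      have hac : ∀ i, (a i : ℝ) = (p i : ℝ) + (k:ℝ) * (e i : ℝ) :=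
        fun i => congrFun (coeff_unique R (c := fun i => (a i:ℝ))
          (c' := fun i => (p i:ℝ) + (k:ℝ) * (e i:ℝ)) (by rw [← ha, ← hcomb])) i
      have hzero : ∀ i, (a i : ℝ) = 0 := by
        intro i
        have h1 : (a i : ℝ) ≤ 0 := by exact_mod_cast hale i
        have h2 : (0:ℝ) ≤ p i := by exact_mod_cast hpge i
        have h3 : (0:ℝ) ≤ e i := by exact_mod_cast heine i
        have h4 : (0:ℝ) ≤ k := by exact_mod_cast hkpos.le
        have h5 := hac i
        nlinarith
      have hwγ0 : w γ = 0 := by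
        rw [ha]
        refine Finset.sum_eq_zero (fun i _ => ?_)
        rw [hzero i, zero_smul]
      exact R.nonzero _ hwγΦ hwγ0

lemma minrep_posP (hlam : IsLam R I lam) {w : E ≃ₗ[ℝ] E} (hwE : Expr R w)
    (hdesc : ∀ j, j ∉ I → R.len w < R.len (w * R.sRefl j))
    {γ : EuclideanSpace ℝ (Fin d)} (hγ : Pos R γ) (horth : ⟪lam, γ⟫ = 0) :
    Pos R (w γ) := by
  obtain ⟨hΦ, c, hc, hge⟩ := hγ
  exact minrep_pos R hlam hwE hdesc (∑ i, c i).toNat γ c hΦ hc hge le_rfl horth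

/-! ### Reachability of minimal coset representatives -/

lemma minrep_reachable (hlam : IsLam R I lam) :
    ∀ N : ℕ, ∀ w : E ≃ₗ[ℝ] E, w ∈ R.weyl → R.len w ≤ N →
    (∀ j, j ∉ I → R.len w < R.len (w * R.sRefl j)) →
    ∃ l : List (Fin n), R.Valid I l ∧ R.seqProd l = w := by
  intro N
  induction N with
  | zero =>
    intro w hweyl hlen _
    have hE : Expr R w := expr_of_weyl R hweyl
    obtain ⟨M, hM, hMlen⟩ := exists_min_word R hE
    have hnil : M = [] := List.length_eq_zero_iff.mp (by omega)
    exact ⟨[], trivial, by rw [← hM, hnil]; rfl⟩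
  | succ N ih =>
    intro w hweyl hlen hdesc
    have hE : Expr R w := expr_of_weyl R hweyl
    rcases eq_or_ne w 1 with rfl | hne1
    · exact ⟨[], trivial, rfl⟩
    -- choose the letter v to fire last
    have hvex : ∃ v, Neg R (w⁻¹ (R.α v)) ∧ 0 < ⟪lam, w⁻¹ (R.α v)⟫ := by
      by_contra hcon
      push_neg at hcon
      have hv0 : ∃ v, Neg R (w⁻¹ (R.α v)) := by
        by_contra hcon2
        push_neg at hcon2
        have hallpos : ∀ v, Pos R (w⁻¹ (R.α v)) := fun v =>
          (trichotomy R (expr_mem R (expr_inv R hE) (R.α_mem v))).resolve_right (hcon2 v)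
        have h1 : w⁻¹ = 1 := eq_one_of_all_pos R (expr_inv R hE) hallpos
        exact hne1 (by rwa [inv_eq_one] at h1)
      obtain ⟨v, hvneg⟩ := hv0
      have hle0 : ⟪lam, w⁻¹ (R.α v)⟫ ≤ 0 := hcon v hvneg
      have hge0 : 0 ≤ ⟪lam, w⁻¹ (R.α v)⟫ := lam_neg_nonneg R hlam hvneg
      have hγpos : Pos R (-(w⁻¹ (R.α v))) := (neg_iff_pos_neg R).mp hvneg
      have hγorth : ⟪lam, -(w⁻¹ (R.α v))⟫ = 0 := by
        rw [inner_neg_right]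
        linarith
      have hP := minrep_posP R hlam hE hdesc hγpos hγorth
      have hcalc : w (-(w⁻¹ (R.α v))) = -(R.α v) := by
        rw [map_neg, apply_inv_app]
      rw [hcalc] at hP
      exact pos_not_neg R hP (neg_alpha_neg R v)
    obtain ⟨v, hvneg, hvpos⟩ := hvex
    set w'' := R.sRefl v * w with hw''def
    have hw''E : Expr R w'' := expr_mul R (expr_sRefl R v) hE
    have hw''weyl : w'' ∈ R.weyl := mul_mem (sRefl_mem_weyl R v) hweyl
    have hw''inv : w''⁻¹ = w⁻¹ * R.sRefl v := by
      rw [hw''def, mul_inv_rev, sRefl_inv]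
    have hlen'' : R.len w'' < R.len w := by
      have h1 : R.len (w⁻¹ * R.sRefl v) < R.len w⁻¹ :=
        len_lt_of_neg R (expr_inv R hE) hvneg
      calc R.len w'' = R.len w''⁻¹ := (len_inv R _).symm
        _ = R.len (w⁻¹ * R.sRefl v) := by rw [hw''inv]
        _ < R.len w⁻¹ := h1
        _ = R.len w := len_inv R w
    have hdesc'' : ∀ j, j ∉ I → R.len w'' < R.len (w'' * R.sRefl j) := by
      intro j hjI
      rcases trichotomy R (expr_mem R hw''E (R.α_mem j)) with hpos | hneg
      · exact len_lt_of_pos R hw''E hpos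
      · exfalso
        have hwαj : Pos R (w (R.α j)) := by
          rcases trichotomy R (expr_mem R hE (R.α_mem j)) with h | h
          · exact h
          · exfalso
            have h1 := len_lt_of_neg R hE h
            have h2 := hdesc j hjI
            omega
        have hx : Pos R (-(w'' (R.α j))) := (neg_iff_pos_neg R).mp hneg
        have hs : R.sRefl v (-(w'' (R.α j))) = -(w (R.α j)) := by
          rw [map_neg, hw''def, mul_app, sRefl_app_app]
        have hNeg2 : Neg R (R.sRefl v (-(w'' (R.α j)))) := by
          rw [hs, neg_iff_pos_neg, neg_neg]
          exact hwαj
        have heqα : -(w'' (R.α j)) = R.α v := eq_alpha_of_pos_neg R v hx hNeg2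
        have hwj : w (R.α j) = R.α v := by
          have h1 := congrArg (R.sRefl v) heqα
          rw [hs, sRefl_alpha_self] at h1
          exact neg_injective h1
        have h2 : w⁻¹ (R.α v) = R.α j := by
          rw [← hwj, inv_apply_app]
        rw [h2, (lam_alpha_eq_zero_iff R hlam j).mpr hjI] at hvpos
        exact lt_irrefl _ hvpos
    obtain ⟨l'', hvalid'', hsp''⟩ := ih w'' hw''weyl (by omega) hdesc''
    refine ⟨l'' ++ [v], ?_, ?_⟩
    · refine valid_concat R hvalid'' ?_
      rw [sad_iff R hlam, play_vec R hlam, hsp'']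
      have hcalc2 : ⟪w'' lam, R.α v⟫ = -⟪lam, w⁻¹ (R.α v)⟫ := by
        rw [hw''def, mul_app, sRefl_selfadj, sRefl_alpha_self, inner_neg_right]
        congr 1
        calc ⟪w lam, R.α v⟫ = ⟪w lam, w (w⁻¹ (R.α v))⟫ := by rw [apply_inv_app]
          _ = ⟪lam, w⁻¹ (R.α v)⟫ := expr_orth R hE lam (w⁻¹ (R.α v))
      rw [hcalc2]
      linarith
    · rw [seqProd_concat, hsp'', hw''def, ← mul_assoc, sRefl_sq, one_mul]

end SKGame

/-- Two valid firing sequences reach the same configuration iff they define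
the same Weyl group element; consequently reachable configurations biject with `W^J`. -/
theorem statement2 {n d : ℕ} (R : RootSystemBase n d) (I : Finset (Fin n)) :
    (∀ l l' : List (Fin n), R.Valid I l → R.Valid I l' →
      (R.play I l = R.play I l' ↔ R.seqProd l = R.seqProd l')) ∧
    ∃ F : (Fin n → ℤ) → (EuclideanSpace ℝ (Fin d) ≃ₗ[ℝ] EuclideanSpace ℝ (Fin d)),
      (∀ l : List (Fin n), R.Valid I l → F (R.play I l) = R.seqProd l) ∧
      Set.BijOn F {c | ∃ l : List (Fin n), R.Valid I l ∧ R.play I l = c} (R.minReps I) := by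
  classical
  obtain ⟨lam, hlam⟩ := SKGame.exists_lam R I
  have hpart1 : ∀ l l' : List (Fin n), R.Valid I l → R.Valid I l' →
      (R.play I l = R.play I l' ↔ R.seqProd l = R.seqProd l') :=
    fun l l' hv hv' => SKGame.part1 R hlam hv hv'
  refine ⟨hpart1, ?_⟩
  set F : (Fin n → ℤ) → (EuclideanSpace ℝ (Fin d) ≃ₗ[ℝ] EuclideanSpace ℝ (Fin d)) :=
    fun c => if h : ∃ l, R.Valid I l ∧ R.play I l = c then R.seqProd h.choose else 1
    with hFdef
  have hF : ∀ l, R.Valid I l → F (R.play I l) = R.seqProd l := by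
    intro l hv
    have hex : ∃ l', R.Valid I l' ∧ R.play I l' = R.play I l := ⟨l, hv, rfl⟩
    rw [hFdef]
    simp only []
    rw [dif_pos hex]
    exact (hpart1 _ l hex.choose_spec.1 hv).mp hex.choose_spec.2
  have hmaps : ∀ l, R.Valid I l → R.seqProd l ∈ R.minReps I := by
    intro l hv
    refine ⟨SKGame.seqProd_mem_weyl R l, fun j hj => ?_⟩
    have hpos := SKGame.valid_pos R hlam hv (R.α j) (SKGame.pos_alpha R j)
      ((SKGame.lam_alpha_eq_zero_iff R hlam j).mpr hj)
    exact SKGame.len_lt_of_pos R (SKGame.expr_seqProd R l) hpos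
  refine ⟨F, hF, ?_, ?_, ?_⟩
  · rintro c ⟨l, hv, rfl⟩
    rw [hF l hv]
    exact hmaps l hv
  · rintro c₁ ⟨l₁, hv₁, hp₁⟩ c₂ ⟨l₂, hv₂, hp₂⟩ heq
    rw [← hp₁, ← hp₂] at heq ⊢
    rw [hF l₁ hv₁, hF l₂ hv₂] at heq
    exact (hpart1 l₁ l₂ hv₁ hv₂).mpr heq
  · rintro w ⟨hweyl, hdesc⟩
    obtain ⟨l, hv, hsp⟩ := SKGame.minrep_reachable R hlam (R.len w) w hweyl le_rfl hdesc
    exact ⟨R.play I l, ⟨l, hv, rfl⟩, by rw [hF l hv, hsp]⟩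
end
end
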